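/- arXiv:1509.07343 — 3 statements merged into one kernel-verified Lean document; each statement's English description precedes it below -/
import Mathlib

section
/- Let h > 0, let c̄ be an even strictly convex function, and let f be a continuous function with t̄_1(f) = 0. Let V ≥ t_1(f) and let Ψ be the unique minimizer of ∫_0^V c̄(φ'(u)) du over absolutely continuous φ on [0,V] with ‖f − φ‖_{∞,[0,V]} ≤ h/2. Then Ψ(0) = f(0) + h/2. -/
open MeasureTheory Set Filter

noncomputable section

/-- `φ` is absolutely continuous on `[a, b]` with a.e. derivative `g`. -/
def IsACDeriv (a b : ℝ) (φ g : ℝ → ℝ) : Prop :=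
  MeasureTheory.IntegrableOn g (Set.Icc a b) ∧
    ∀ x ∈ Set.Icc a b, φ x = φ a + ∫ t in a..x, g t

/-- `φ` stays within distance `h/2` of `w` on `[a, b]`. -/
def InTube (a b h : ℝ) (w φ : ℝ → ℝ) : Prop :=
  ∀ x ∈ Set.Icc a b, |w x - φ x| ≤ h / 2

/-- Admissible function (with derivative `g`) for the free-boundary problem. -/
def AdmissibleFree (a b h : ℝ) (w φ g : ℝ → ℝ) : Prop :=
  IsACDeriv a b φ g ∧ InTube a b h w φ

/-- Admissible function for the problem with boundary conditions `φ a = c`, `φ b = d`. -/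
def AdmissibleBC (a b h c d : ℝ) (w φ g : ℝ → ℝ) : Prop :=
  AdmissibleFree a b h w φ g ∧ φ a = c ∧ φ b = d

/-- The `C`-energy of a function with derivative `g` on `[a, b]`. -/
def energy (a b : ℝ) (C g : ℝ → ℝ) : ℝ := ∫ u in a..b, C (g u)

/-- `(φ, g)` is the unique minimizer (unique as a function on `[a,b]`) of the
`C`-energy over the free-boundary admissible class. -/
def IsUniqueMinFree (a b h : ℝ) (w C φ g : ℝ → ℝ) : Prop :=
  AdmissibleFree a b h w φ g ∧
  (∀ ψ k, AdmissibleFree a b h w ψ k → energy a b C g ≤ energy a b C k) ∧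
  (∀ ψ k, AdmissibleFree a b h w ψ k → energy a b C k ≤ energy a b C g →
    Set.EqOn ψ φ (Set.Icc a b))

/-- `(φ, g)` is the unique minimizer of the `C`-energy over the admissible class
with boundary conditions `φ a = c`, `φ b = d`. -/
def IsUniqueMinBC (a b h c d : ℝ) (w C φ g : ℝ → ℝ) : Prop :=
  AdmissibleBC a b h c d w φ g ∧
  (∀ ψ k, AdmissibleBC a b h c d w ψ k → energy a b C g ≤ energy a b C k) ∧
  (∀ ψ k, AdmissibleBC a b h c d w ψ k → energy a b C k ≤ energy a b C g →
    Set.EqOn ψ φ (Set.Icc a b))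

/-- `(φ, g)` is the taut string associated with `w` on `[0, T]`:
the unique minimizer of the quadratic energy among absolutely continuous functions
staying in the tube of width `h` around `w`, with `φ 0 = w 0` and `φ T = w T`. -/
def IsTautString (T h : ℝ) (w φ g : ℝ → ℝ) : Prop :=
  IsUniqueMinBC 0 T h (w 0) (w T) w (fun x => x ^ 2) φ g

/-- The times `t_n` delimiting the successive peaks and valleys of height/depth `h`. -/
noncomputable def hitTime (w : ℝ → ℝ) (h : ℝ) : ℕ → ℝ
  | 0 => 0
  | n + 1 =>
    if Even n then
      sInf {s : ℝ | hitTime w h n ≤ s ∧ w s - sInf (w '' Set.Icc (hitTime w h n) s) = h}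
    else
      sInf {s : ℝ | hitTime w h n ≤ s ∧ sSup (w '' Set.Icc (hitTime w h n) s) - w s = h}

/-- The set whose infimum defines `t_{n+1}`; its nonemptiness expresses `t_{n+1} < ∞`. -/
noncomputable def HitSet (w : ℝ → ℝ) (h : ℝ) (n : ℕ) : Set ℝ :=
  if Even n then
    {s : ℝ | hitTime w h n ≤ s ∧ w s - sInf (w '' Set.Icc (hitTime w h n) s) = h}
  else
    {s : ℝ | hitTime w h n ≤ s ∧ sSup (w '' Set.Icc (hitTime w h n) s) - w s = h}

/-- The times `t̄_n` of the `h`-extrema of `w` (Neveu–Pitman decomposition). -/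
noncomputable def extTime (w : ℝ → ℝ) (h : ℝ) : ℕ → ℝ
  | 0 => 0
  | n + 1 =>
    if Even n then
      sSup {s : ℝ | s ∈ Set.Icc (hitTime w h n) (hitTime w h (n + 1)) ∧
        sInf (w '' Set.Icc (hitTime w h n) s) = w s}
    else
      sSup {s : ℝ | s ∈ Set.Icc (hitTime w h n) (hitTime w h (n + 1)) ∧
        sSup (w '' Set.Icc (hitTime w h n) s) = w s}

/-- `N(T) = sup {n : t̄_n ≤ T}`. -/
noncomputable def NT (w : ℝ → ℝ) (h T : ℝ) : ℕ := sSup {n : ℕ | extTime w h n ≤ T}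

/-- `(φ, g)` is the function `ψ_i`: the unique minimizer of the quadratic energy on
`I_i = [t̄_i, t̄_{i+1}]` in the tube of width `h` around `w`, with boundary values
`w (t̄_i) - (-1)^i h/2` and `w (t̄_{i+1}) + (-1)^i h/2`. -/
def IsPsi (w : ℝ → ℝ) (h : ℝ) (i : ℕ) (φ g : ℝ → ℝ) : Prop :=
  IsUniqueMinBC (extTime w h i) (extTime w h (i + 1)) h
    (w (extTime w h i) - (-1 : ℝ) ^ i * (h / 2))
    (w (extTime w h (i + 1)) + (-1 : ℝ) ^ i * (h / 2))
    w (fun x => x ^ 2) φ g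


section Aux

lemma cbar_min {cbar : ℝ → ℝ} (hconv : StrictConvexOn ℝ Set.univ cbar)
    (heven : ∀ x : ℝ, cbar (-x) = cbar x) (x : ℝ) : cbar 0 ≤ cbar x := by
  rcases eq_or_ne x 0 with rfl | hx
  · exact le_rfl
  · have hne : x ≠ -x := by
      intro hc; apply hx; linarith
    have := hconv.2 (Set.mem_univ x) (Set.mem_univ (-x)) hne
      (by norm_num : (0:ℝ) < 1/2) (by norm_num : (0:ℝ) < 1/2) (by norm_num)
    simp only [smul_eq_mul] at this
    have h0 : (1/2 : ℝ) * x + (1/2 : ℝ) * (-x) = 0 := by ring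
    rw [h0, heven x] at this
    linarith

lemma ae_ne_pt (m : ℝ) : ∀ᵐ u : ℝ ∂volume, u ≠ m := by
  simp [ae_iff]

lemma intervalIntegrable_if_lt {g1 g2 : ℝ → ℝ} {a m b : ℝ} (ham : a ≤ m) (hmb : m ≤ b)
    (h1 : IntervalIntegrable g1 volume a m) (h2 : IntervalIntegrable g2 volume m b) :
    IntervalIntegrable (fun u => if u < m then g1 u else g2 u) volume a b := by
  apply IntervalIntegrable.trans (b := m)
  · rw [intervalIntegrable_iff_integrableOn_Ioc_of_le ham] at h1 ⊢
    apply h1.congr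
    filter_upwards [ae_restrict_mem measurableSet_Ioc, ae_restrict_of_ae (ae_ne_pt m)]
      with u hu hne
    simp [lt_of_le_of_ne hu.2 hne]
  · rw [intervalIntegrable_iff_integrableOn_Ioc_of_le hmb] at h2 ⊢
    apply h2.congr
    filter_upwards [ae_restrict_mem measurableSet_Ioc] with u hu
    simp [not_lt.2 hu.1.le]

noncomputable section

lemma kb_intervalIntegrable {a b η : ℝ} (p q : ℝ) :
    IntervalIntegrable (fun u => if a < u ∧ u ≤ b then η * (a + b - 2*u) else 0) volume p q := by
  have hg : Continuous fun u : ℝ => η * (a + b - 2*u) := by continuity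
  have heq : (fun u => if a < u ∧ u ≤ b then η * (a + b - 2*u) else 0)
      = (Set.Ioc a b).indicator fun u => η * (a + b - 2*u) := by
    funext u; simp [Set.indicator, Set.mem_Ioc]
  rw [heq, intervalIntegrable_iff]
  exact ((hg.intervalIntegrable p q).def' ).indicator measurableSet_Ioc

lemma kb_linear_part {a b η : ℝ} {p q : ℝ} (hap : a ≤ p) (hpq : p ≤ q) (hqb : q ≤ b) :
    ∫ u in p..q, (if a < u ∧ u ≤ b then η * (a + b - 2*u) else 0)
      = η * ((a + b) * (q - p) - (q^2 - p^2)) := by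
  have h1 : ∫ u in p..q, (if a < u ∧ u ≤ b then η * (a + b - 2*u) else 0)
      = ∫ u in p..q, (η * (a + b) - (2*η) * u) := by
    apply intervalIntegral.integral_congr_ae
    apply Filter.Eventually.of_forall
    intro u hu
    rw [Set.uIoc_of_le hpq] at hu
    have : a < u ∧ u ≤ b := ⟨lt_of_le_of_lt hap hu.1, le_trans hu.2 hqb⟩
    rw [if_pos this]; ring
  rw [h1, intervalIntegral.integral_sub intervalIntegrable_const
      (intervalIntegral.intervalIntegrable_id.const_mul _),
    intervalIntegral.integral_const, intervalIntegral.integral_const_mul, integral_id,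
    smul_eq_mul]
  ring

lemma kb_primitive {a b η : ℝ} (hab : a < b) (ha : 0 ≤ a) {x : ℝ} (hx : 0 ≤ x) :
    ∫ u in (0:ℝ)..x, (if a < u ∧ u ≤ b then η * (a + b - 2*u) else 0)
      = (if a ≤ x ∧ x ≤ b then η * (x - a) * (b - x) else 0) := by
  set kb := fun u => if a < u ∧ u ≤ b then η * (a + b - 2*u) else 0 with hkb
  have base : ∀ y : ℝ, 0 ≤ y → y ≤ a → ∫ u in (0:ℝ)..y, kb u = 0 := by
    intro y hy0 hya
    have : ∫ u in (0:ℝ)..y, kb u = ∫ u in (0:ℝ)..y, (0:ℝ) := by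
      apply intervalIntegral.integral_congr_ae
      apply Filter.Eventually.of_forall
      intro u hu
      rw [Set.uIoc_of_le hy0] at hu
      have : ¬ (a < u ∧ u ≤ b) := by
        intro hc; exact absurd (le_trans hu.2 hya) (not_le.2 hc.1)
      simp [hkb, this]
    simpa using this
  rcases le_or_gt x a with hxa | hax
  · rw [base x hx hxa]
    split_ifs with hc
    · have : x = a := le_antisymm hxa hc.1
      rw [this]; ring
    · rfl
  · rcases le_or_gt x b with hxb | hbx
    · rw [← intervalIntegral.integral_add_adjacent_intervals
        (kb_intervalIntegrable (a := a) (b := b) (η := η) 0 a)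
        (kb_intervalIntegrable (a := a) (b := b) (η := η) a x),
        base a ha le_rfl, kb_linear_part le_rfl hax.le hxb, if_pos ⟨hax.le, hxb⟩]
      ring
    · rw [← intervalIntegral.integral_add_adjacent_intervals
        (kb_intervalIntegrable (a := a) (b := b) (η := η) 0 b)
        (kb_intervalIntegrable (a := a) (b := b) (η := η) b x),
        ← intervalIntegral.integral_add_adjacent_intervals
        (kb_intervalIntegrable (a := a) (b := b) (η := η) 0 a)
        (kb_intervalIntegrable (a := a) (b := b) (η := η) a b),
        base a ha le_rfl, kb_linear_part le_rfl hab.le le_rfl]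
      have h2 : ∫ u in b..x, kb u = 0 := by
        have : ∫ u in b..x, kb u = ∫ u in b..x, (0:ℝ) := by
          apply intervalIntegral.integral_congr_ae
          apply Filter.Eventually.of_forall
          intro u hu
          rw [Set.uIoc_of_le hbx.le] at hu
          have : ¬ (a < u ∧ u ≤ b) := by
            intro hc; exact absurd hc.2 (not_le.2 hu.1)
          simp [hkb, this]
        simpa using this
      rw [h2, if_neg (by intro hc; exact absurd hc.2 (not_le.2 hbx))]
      ring

lemma bump_contra (h V : ℝ) (hh : 0 < h) (f cbar Ψ Ψ' : ℝ → ℝ)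
    (hΨ : IsUniqueMinFree 0 V h f cbar Ψ Ψ')
    (l r : ℝ) (hl : 0 ≤ l) (hr : r ≤ V) (hlr : l ≤ r)
    (hwild : ¬ IntervalIntegrable (fun u => cbar (Ψ' u)) volume l r)
    (a b : ℝ) (ha : 0 ≤ a) (hab : a < b) (hbV : b ≤ V)
    (hdisj : ∀ u, u ∈ Set.Ioc a b → u ∉ Set.Icc l r)
    (s : ℝ) (hs : s = 1 ∨ s = -1)
    (hmargin : ∀ x ∈ Set.Icc a b, s * (Ψ x - f x) ≤ h / 4) : False := by
  obtain ⟨⟨⟨hint, hrep⟩, htube⟩, hmin, huniq⟩ := hΨ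
  have h0V : (0:ℝ) ≤ V := le_trans ha (le_trans hab.le hbV)
  set η : ℝ := h / (b - a)^2 with hηdef
  have hba : (0:ℝ) < (b - a)^2 := pow_pos (by linarith) 2
  have hη : η * (b - a)^2 = h := by
    rw [hηdef]; field_simp [(sub_pos.2 hab).ne']
  have hηpos : 0 < η := div_pos hh hba
  set kb : ℝ → ℝ := fun u => if a < u ∧ u ≤ b then η * (a + b - 2*u) else 0 with hkbdef
  set B : ℝ → ℝ := fun x => if a ≤ x ∧ x ≤ b then η * (x - a) * (b - x) else 0 with hBdef
  set ψ2 : ℝ → ℝ := fun x => Ψ x + s * B x with hψ2def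
  set k2 : ℝ → ℝ := fun u => Ψ' u + s * kb u with hk2def
  have hBbound : ∀ x, 0 ≤ B x ∧ B x ≤ h / 4 := by
    intro x
    rw [hBdef]; dsimp only
    split_ifs with hc
    · obtain ⟨h1, h2⟩ := hc
      constructor
      · have hx1 : 0 ≤ x - a := by linarith
        have hx2 : 0 ≤ b - x := by linarith
        positivity
      · nlinarith [mul_nonneg hηpos.le (sq_nonneg (x - a - (b - x))), hη]
    · exact ⟨le_rfl, by positivity⟩
  have hB0 : B 0 = 0 := by
    rw [hBdef]; dsimp only
    split_ifs with hc
    · have : a = 0 := le_antisymm hc.1 ha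
      rw [this]; ring
    · rfl
  have hkbint : ∀ p q : ℝ, IntervalIntegrable kb volume p q := fun p q =>
    kb_intervalIntegrable p q
  have hΨ'int : ∀ x ∈ Set.Icc 0 V, IntervalIntegrable Ψ' volume 0 x := by
    intro x hx
    rw [intervalIntegrable_iff_integrableOn_Ioc_of_le hx.1]
    exact (hint.mono_set (Set.Icc_subset_Icc le_rfl hx.2)).mono_set Set.Ioc_subset_Icc_self
  have hadm : AdmissibleFree 0 V h f ψ2 k2 := by
    refine ⟨⟨?_, ?_⟩, ?_⟩
    · apply hint.add
      have := (hkbint 0 V)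
      rw [intervalIntegrable_iff_integrableOn_Icc_of_le h0V] at this
      exact (this.const_mul s).congr (Filter.Eventually.of_forall (fun u => by ring))
    · intro x hx
      have hBx : ∫ u in (0:ℝ)..x, kb u = B x := kb_primitive hab ha hx.1
      rw [hψ2def]; dsimp only
      rw [intervalIntegral.integral_add (hΨ'int x hx) ((hkbint 0 x).const_mul s)]
      rw [intervalIntegral.integral_const_mul, hBx, hB0, hrep x hx]
      ring
    · intro x hx
      by_cases hxab : a ≤ x ∧ x ≤ b
      · have hm := hmargin x ⟨hxab.1, hxab.2⟩
        have htx := htube x hx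
        obtain ⟨hB1, hB2⟩ := hBbound x
        rw [abs_le] at htx ⊢
        rw [hψ2def]; dsimp only
        rcases hs with rfl | rfl
        · constructor <;> [skip; skip] <;> nlinarith [htx.1, htx.2]
        · constructor <;> [skip; skip] <;> nlinarith [htx.1, htx.2]
      · rw [hψ2def]; dsimp only
        have : B x = 0 := by rw [hBdef]; exact if_neg hxab
        rw [this]
        simpa using htube x hx
  have hsub : Set.uIcc l r ⊆ Set.uIcc 0 V := by
    rw [Set.uIcc_of_le h0V, Set.uIcc_of_le hlr]
    exact Set.Icc_subset_Icc hl hr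
  have hE0 : ¬ IntervalIntegrable (fun u => cbar (Ψ' u)) volume 0 V := by
    intro hI; exact hwild (hI.mono_set hsub)
  have hE2 : ¬ IntervalIntegrable (fun u => cbar (k2 u)) volume 0 V := by
    intro hI
    apply hwild
    have h2 := hI.mono_set hsub
    rw [intervalIntegrable_iff_integrableOn_Ioc_of_le hlr] at h2 ⊢
    apply h2.congr
    filter_upwards [ae_restrict_mem measurableSet_Ioc] with u hu
    have hub : u ∉ Set.Ioc a b := fun hc => hdisj u hc (Set.Ioc_subset_Icc_self hu)
    have : kb u = 0 := by
      rw [hkbdef]; dsimp only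
      rw [if_neg (fun hc => hub ⟨hc.1, hc.2⟩)]
    rw [hk2def]; dsimp only
    rw [this, mul_zero, add_zero]
  have hen1 : energy 0 V cbar Ψ' = 0 := intervalIntegral.integral_undef hE0
  have hen2 : energy 0 V cbar k2 = 0 := intervalIntegral.integral_undef hE2
  have heq : Set.EqOn ψ2 Ψ (Set.Icc 0 V) := huniq ψ2 k2 hadm (by rw [hen1, hen2])
  have hx0 : (a + b) / 2 ∈ Set.Icc (0:ℝ) V := ⟨by linarith, by linarith⟩
  have := heq hx0
  rw [hψ2def] at this; dsimp only at this
  have hBx0 : B ((a + b)/2) = η * ((a+b)/2 - a) * (b - (a+b)/2) := by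
    rw [hBdef]; dsimp only
    rw [if_pos ⟨by linarith, by linarith⟩]
  have hpos : 0 < B ((a+b)/2) := by
    rw [hBx0]
    have h1 : 0 < (a+b)/2 - a := by linarith
    have h2 : 0 < b - (a+b)/2 := by linarith
    positivity
  rcases hs with rfl | rfl <;> nlinarith [hpos]

lemma exists_bump_interval {V h : ℝ} {f Ψ : ℝ → ℝ}
    (hD : ContinuousOn (fun x => Ψ x - f x) (Set.Icc 0 V))
    (hh : 0 < h) (p q : ℝ) (hp : 0 ≤ p) (hq : q ≤ V) (hpq : p < q) :
    ∃ a b s, p < a ∧ a < b ∧ b < q ∧ (s = 1 ∨ s = -1) ∧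
      ∀ x ∈ Set.Icc a b, s * (Ψ x - f x) ≤ h / 4 := by
  set x0 : ℝ := (p + q) / 2 with hx0def
  have hpx0 : p < x0 := by rw [hx0def]; linarith
  have hx0q : x0 < q := by rw [hx0def]; linarith
  set s : ℝ := if Ψ x0 ≤ f x0 then 1 else -1 with hsdef
  have hs : s = 1 ∨ s = -1 := by
    rw [hsdef]; split_ifs <;> [left; right] <;> rfl
  have hs0 : s * (Ψ x0 - f x0) ≤ 0 := by
    rw [hsdef]; split_ifs with hc
    · nlinarith
    · push_neg at hc; nlinarith
  have hx0mem : x0 ∈ Set.Icc (0:ℝ) V := ⟨by linarith, by linarith⟩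
  have hcont : ContinuousOn (fun x => s * (Ψ x - f x)) (Set.Icc 0 V) :=
    continuousOn_const.mul hD
  have hcw : ContinuousWithinAt (fun x => s * (Ψ x - f x)) (Set.Icc 0 V) x0 :=
    hcont x0 hx0mem
  have hev : (fun x => s * (Ψ x - f x)) ⁻¹' (Set.Iio (h/4)) ∈ nhdsWithin x0 (Set.Icc 0 V) :=
    hcw (Iio_mem_nhds (by linarith))
  rw [mem_nhdsWithin] at hev
  obtain ⟨U, hUo, hx0U, hU⟩ := hev
  obtain ⟨δ, hδ, hball⟩ := Metric.isOpen_iff.mp hUo x0 hx0U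
  refine ⟨max ((p + x0)/2) (x0 - δ/2), min ((x0 + q)/2) (x0 + δ/2), s, ?_, ?_, ?_, hs, ?_⟩
  · apply lt_max_of_lt_left; linarith
  · apply max_lt <;> apply lt_min <;> linarith
  · apply min_lt_of_left_lt; linarith
  · intro x hx
    have hx1 : x0 - δ/2 ≤ x := le_trans (le_max_right _ _) hx.1
    have hx2 : x ≤ x0 + δ/2 := le_trans hx.2 (min_le_right _ _)
    have hxp : (p + x0)/2 ≤ x := le_trans (le_max_left _ _) hx.1
    have hxq : x ≤ (x0 + q)/2 := le_trans hx.2 (min_le_left _ _)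
    have hxIcc : x ∈ Set.Icc (0:ℝ) V := ⟨by linarith, by linarith⟩
    have hxU : x ∈ U := by
      apply hball
      rw [Metric.mem_ball, Real.dist_eq, abs_lt]
      constructor <;> linarith
    exact le_of_lt (hU ⟨hxU, hxIcc⟩)

lemma key_integrable (h V : ℝ) (hh : 0 < h) (hV0 : 0 < V) (f cbar Ψ Ψ' : ℝ → ℝ)
    (hf : Continuous f) (hΨ : IsUniqueMinFree 0 V h f cbar Ψ Ψ') :
    IntervalIntegrable (fun u => cbar (Ψ' u)) volume 0 V := by
  by_contra H
  obtain ⟨⟨⟨hint, hrep⟩, htube⟩, hmin, huniq⟩ := hΨ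
  have hΨc : ContinuousOn Ψ (Set.Icc 0 V) := by
    have h1 : IntegrableOn Ψ' (Set.uIcc 0 V) := by rwa [Set.uIcc_of_le hV0.le]
    have h2 : ContinuousOn (fun x => Ψ 0 + ∫ t in (0:ℝ)..x, Ψ' t) (Set.uIcc 0 V) :=
      continuousOn_const.add (intervalIntegral.continuousOn_primitive_interval h1)
    rw [Set.uIcc_of_le hV0.le] at h2
    exact h2.congr (fun x hx => hrep x hx)
  have hD : ContinuousOn (fun x => Ψ x - f x) (Set.Icc 0 V) :=
    hΨc.sub hf.continuousOn
  have hΨ' : IsUniqueMinFree 0 V h f cbar Ψ Ψ' := ⟨⟨⟨hint, hrep⟩, htube⟩, hmin, huniq⟩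
  by_cases H2 : IntervalIntegrable (fun u => cbar (Ψ' u)) volume (V/2) V
  · have hw : ¬ IntervalIntegrable (fun u => cbar (Ψ' u)) volume 0 (V/2) :=
      fun h1 => H (h1.trans H2)
    obtain ⟨a, b, s, hpa, hab, hbq, hs, hmargin⟩ :=
      exists_bump_interval hD hh (V/2) V (by linarith) le_rfl (by linarith)
    exact bump_contra h V hh f cbar Ψ Ψ' hΨ' 0 (V/2) le_rfl (by linarith) (by linarith) hw
      a b (by linarith) hab (by linarith)
      (fun u hu hmem => absurd hmem.2 (by push_neg; linarith [hu.1])) s hs hmargin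
  · obtain ⟨a, b, s, hpa, hab, hbq, hs, hmargin⟩ :=
      exists_bump_interval hD hh 0 (V/2) le_rfl (by linarith) (by linarith)
    exact bump_contra h V hh f cbar Ψ Ψ' hΨ' (V/2) V (by linarith) le_rfl (by linarith) H2
      a b (by linarith) hab (by linarith)
      (fun u hu hmem => absurd hmem.1 (by push_neg; linarith [hu.2])) s hs hmargin

lemma psi_continuous {V : ℝ} (hV0 : 0 ≤ V) {Ψ Ψ' : ℝ → ℝ}
    (hint : IntegrableOn Ψ' (Set.Icc 0 V))
    (hrep : ∀ x ∈ Set.Icc 0 V, Ψ x = Ψ 0 + ∫ t in (0:ℝ)..x, Ψ' t) :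
    ContinuousOn Ψ (Set.Icc 0 V) := by
  have h1 : IntegrableOn Ψ' (Set.uIcc 0 V) := by rwa [Set.uIcc_of_le hV0]
  have h2 : ContinuousOn (fun x => Ψ 0 + ∫ t in (0:ℝ)..x, Ψ' t) (Set.uIcc 0 V) :=
    continuousOn_const.add (intervalIntegral.continuousOn_primitive_interval h1)
  rw [Set.uIcc_of_le hV0] at h2
  exact h2.congr (fun x hx => hrep x hx)

lemma min_attained {f : ℝ → ℝ} (hf : Continuous f) {s : ℝ} (hs : 0 ≤ s) :
    ∃ m ∈ Set.Icc (0:ℝ) s, sInf (f '' Set.Icc 0 s) = f m ∧ ∀ y ∈ Set.Icc (0:ℝ) s, f m ≤ f y := by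
  obtain ⟨m, hmmem, hmin⟩ := (isCompact_Icc (a := (0:ℝ)) (b := s)).exists_isMinOn
    (Set.nonempty_Icc.2 hs) hf.continuousOn
  refine ⟨m, hmmem, ?_, fun y hy => hmin hy⟩
  apply le_antisymm
  · exact csInf_le ((isCompact_Icc.image hf).bddBelow) ⟨m, hmmem, rfl⟩
  · apply le_csInf ((Set.nonempty_Icc.2 hs).image f)
    rintro y ⟨z, hz, rfl⟩
    exact hmin hz

/-- **Lemma 2.1.** If `t̄_1(f) = 0` and `V ≥ t_1(f)`, then the unique minimizer `Ψ`
of the free-boundary `c̄`-energy problem on `[0, V]` satisfies `Ψ 0 = f 0 + h/2`. -/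
theorem free_minimizer_starts_at_top
    (h : ℝ) (hh : 0 < h)
    (cbar : ℝ → ℝ) (hconv : StrictConvexOn ℝ Set.univ cbar)
    (heven : ∀ x : ℝ, cbar (-x) = cbar x)
    (f : ℝ → ℝ) (hf : Continuous f)
    (hfin : (HitSet f h 0).Nonempty)
    (ht1 : extTime f h 1 = 0)
    (V : ℝ) (hV : hitTime f h 1 ≤ V)
    (Ψ Ψ' : ℝ → ℝ) (hΨ : IsUniqueMinFree 0 V h f cbar Ψ Ψ') :
    Ψ 0 = f 0 + h / 2 := by
  obtain ⟨⟨⟨hint, hrep⟩, htube⟩, hmin, huniq⟩ := hΨ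
  set S : Set ℝ := {s : ℝ | 0 ≤ s ∧ f s - sInf (f '' Set.Icc 0 s) = h} with hSdef
  have hSne : S.Nonempty := by
    have hhs : HitSet f h 0 = S := by rw [hSdef]; simp [HitSet, hitTime]
    rwa [hhs] at hfin
  have hSbd : BddBelow S := ⟨0, fun s hs => hs.1⟩
  have ht1S : hitTime f h 1 = sInf S := by rw [hSdef]; simp [hitTime]
  set t1 : ℝ := hitTime f h 1 with ht1def
  have ht1nn : 0 ≤ t1 := by rw [ht1S]; exact le_csInf hSne fun s hs => hs.1
  have hmem : ∀ s ∈ S, t1 ≤ s := fun s hs => by rw [ht1S]; exact csInf_le hSbd hs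
  set T : Set ℝ := {s : ℝ | s ∈ Set.Icc 0 t1 ∧ sInf (f '' Set.Icc 0 s) = f s} with hTdef
  have hText : extTime f h 1 = sSup T := by rw [hTdef, ht1def]; simp [extTime, hitTime]
  have hTbd : BddAbove T := ⟨t1, fun x hx => hx.1.2⟩
  have hTle : ∀ x ∈ T, x ≤ 0 := by
    intro x hx
    have h1 : x ≤ sSup T := le_csSup hTbd hx
    rwa [← hText, ht1] at h1
  have hinf : ∀ s ∈ Set.Icc (0:ℝ) t1, sInf (f '' Set.Icc 0 s) = f 0 := by
    intro s hs
    obtain ⟨m, hmmem, himg, hminy⟩ := min_attained hf hs.1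
    have hm0 : m = 0 := by
      have hmT : m ∈ T := by
        refine ⟨⟨hmmem.1, le_trans hmmem.2 hs.2⟩, ?_⟩
        obtain ⟨m', hm'mem, himg', hminy'⟩ := min_attained hf hmmem.1
        have hle1 : f m ≤ f m' := hminy m' ⟨hm'mem.1, le_trans hm'mem.2 hmmem.2⟩
        have hle2 : f m' ≤ f m := hminy' m ⟨hmmem.1, le_rfl⟩
        rw [himg']
        exact le_antisymm hle2 hle1
      exact le_antisymm (hTle m hmT) hmmem.1
    rw [himg, hm0]
  have hf0le : ∀ x ∈ Set.Icc (0:ℝ) t1, f 0 ≤ f x := by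
    intro x hx
    have h1 := hinf x hx
    have h2 : sInf (f '' Set.Icc 0 x) ≤ f x :=
      csInf_le ((isCompact_Icc.image hf).bddBelow) ⟨x, ⟨hx.1, le_rfl⟩, rfl⟩
    rwa [h1] at h2
  have hft1_ge : f 0 + h ≤ f t1 := by
    by_contra hlt
    push_neg at hlt
    have hε : 0 < f 0 + h - f t1 := by linarith
    set ε : ℝ := f 0 + h - f t1 with hεdef
    obtain ⟨δ, hδ, hδc⟩ := Metric.continuous_iff.mp hf t1 (ε/2) (by linarith)
    have hlt2 : sInf S < t1 + δ := by rw [← ht1S]; linarith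
    obtain ⟨s, hsS, hslt⟩ := exists_lt_of_csInf_lt hSne hlt2
    have hst1 : t1 ≤ s := hmem s hsS
    obtain ⟨m, hmmem, himg, hminy⟩ := min_attained hf (le_trans ht1nn hst1)
    have hfs : f s - f m = h := by rw [← himg]; exact hsS.2
    have hfm0 : f m ≤ f 0 := hminy 0 ⟨le_rfl, le_trans ht1nn hst1⟩
    have hds : dist s t1 < δ := by
      rw [Real.dist_eq, abs_lt]; constructor <;> linarith
    have h6 := hδc s hds
    rw [Real.dist_eq, abs_lt] at h6
    rcases le_or_gt m t1 with hmt | hmt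
    · have hfm : f 0 ≤ f m := hf0le m ⟨hmmem.1, hmt⟩
      linarith
    · have hdm : dist m t1 < δ := by
        rw [Real.dist_eq, abs_lt]; constructor <;> linarith [hmmem.2]
      have h5 := hδc m hdm
      rw [Real.dist_eq, abs_lt] at h5
      have h8 : f 0 ≤ f t1 := hf0le t1 ⟨ht1nn, le_rfl⟩
      linarith
  have hIVT : f t1 = f 0 + h := by
    obtain ⟨s', hs'mem, hs'⟩ := intermediate_value_Icc ht1nn hf.continuousOn
      (⟨by linarith, hft1_ge⟩ : f 0 + h ∈ Set.Icc (f 0) (f t1))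
    have hs'S : s' ∈ S := ⟨hs'mem.1, by rw [hinf s' hs'mem, hs']; ring⟩
    have hs't1 : s' = t1 := le_antisymm hs'mem.2 (hmem s' hs'S)
    rw [← hs't1, hs']
  have hfle : ∀ x ∈ Set.Icc (0:ℝ) t1, f x ≤ f 0 + h := by
    intro x hx
    by_contra hgt; push_neg at hgt
    obtain ⟨s', hs'mem, hs'⟩ := intermediate_value_Icc hx.1 hf.continuousOn
      (⟨by linarith, hgt.le⟩ : f 0 + h ∈ Set.Icc (f 0) (f x))
    have hs'S : s' ∈ S :=
      ⟨hs'mem.1, by rw [hinf s' ⟨hs'mem.1, le_trans hs'mem.2 hx.2⟩, hs']; ring⟩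
    have hxt1 : x = t1 := le_antisymm hx.2 (le_trans (hmem s' hs'S) hs'mem.2)
    rw [hxt1, hIVT] at hgt; linarith
  have ht1pos : 0 < t1 := by
    rcases lt_or_eq_of_le ht1nn with h1 | h1
    · exact h1
    · exfalso; rw [← h1] at hIVT; linarith
  have hV0 : 0 < V := lt_of_lt_of_le ht1pos hV
  set c : ℝ := f 0 + h/2 with hcdef
  have htube0 := htube 0 ⟨le_rfl, hV0.le⟩
  rw [abs_le] at htube0
  have hΨ0le : Ψ 0 ≤ c := by rw [hcdef]; linarith [htube0.1]
  by_contra hne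
  have hΨ0lt : Ψ 0 < c := lt_of_le_of_ne hΨ0le hne
  have ht1V : t1 ∈ Set.Icc (0:ℝ) V := ⟨ht1nn, hV⟩
  have htubet1 := htube t1 ht1V
  rw [abs_le] at htubet1
  have hΨt1 : c ≤ Ψ t1 := by rw [hcdef]; linarith [htubet1.2, hIVT]
  have hΨc : ContinuousOn Ψ (Set.Icc 0 V) := psi_continuous hV0.le hint hrep
  obtain ⟨τ, hτmem, hτ⟩ := intermediate_value_Icc ht1nn
    (hΨc.mono (Set.Icc_subset_Icc le_rfl hV))
    (⟨hΨ0lt.le, hΨt1⟩ : c ∈ Set.Icc (Ψ 0) (Ψ t1))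
  have hτ0 : 0 ≤ τ := hτmem.1
  have hτV : τ ≤ V := le_trans hτmem.2 hV
  set ψc : ℝ → ℝ := fun x => if x ≤ τ then c else Ψ x with hψcdef
  set kc : ℝ → ℝ := fun u => if u < τ then 0 else Ψ' u with hkcdef
  have hΨ'iv : ∀ p q : ℝ, 0 ≤ p → q ≤ V → p ≤ q → IntervalIntegrable Ψ' volume p q := by
    intro p q hp hq hpq
    rw [intervalIntegrable_iff_integrableOn_Ioc_of_le hpq]
    exact (hint.mono_set (Set.Icc_subset_Icc hp hq)).mono_set Set.Ioc_subset_Icc_self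
  have hkciv : IntervalIntegrable kc volume 0 V :=
    intervalIntegrable_if_lt hτ0 hτV intervalIntegrable_const (hΨ'iv τ V hτ0 le_rfl hτV)
  have hkcint : IntegrableOn kc (Set.Icc 0 V) :=
    (intervalIntegrable_iff_integrableOn_Icc_of_le hV0.le).1 hkciv
  have hkczero : ∀ y : ℝ, 0 ≤ y → y ≤ τ → ∫ t in (0:ℝ)..y, kc t = 0 := by
    intro y hy0 hyτ
    have h1 : ∫ t in (0:ℝ)..y, kc t = ∫ t in (0:ℝ)..y, (0:ℝ) := by
      apply intervalIntegral.integral_congr_ae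
      filter_upwards [ae_ne_pt τ] with u hu humem
      rw [Set.uIoc_of_le hy0] at humem
      have hlt : u < τ := lt_of_le_of_ne (le_trans humem.2 hyτ) hu
      rw [hkcdef]; dsimp only; rw [if_pos hlt]
    simpa using h1
  have hψc0 : ψc 0 = c := by rw [hψcdef]; dsimp only; rw [if_pos hτ0]
  have hrepc : ∀ x ∈ Set.Icc (0:ℝ) V, ψc x = ψc 0 + ∫ t in (0:ℝ)..x, kc t := by
    intro x hx
    rcases le_or_gt x τ with hxτ | hxτ
    · rw [hψc0, hkczero x hx.1 hxτ, hψcdef]; dsimp only; rw [if_pos hxτ]; ring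
    · have hsub1 : Set.uIcc (0:ℝ) τ ⊆ Set.uIcc (0:ℝ) V := by
        rw [Set.uIcc_of_le hV0.le, Set.uIcc_of_le hτ0]
        exact Set.Icc_subset_Icc le_rfl hτV
      have hsub2 : Set.uIcc τ x ⊆ Set.uIcc (0:ℝ) V := by
        rw [Set.uIcc_of_le hV0.le, Set.uIcc_of_le hxτ.le]
        exact Set.Icc_subset_Icc hτ0 hx.2
      have hsplit : (∫ t in (0:ℝ)..τ, kc t) + ∫ t in τ..x, kc t = ∫ t in (0:ℝ)..x, kc t :=
        intervalIntegral.integral_add_adjacent_intervals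
          (hkciv.mono_set hsub1) (hkciv.mono_set hsub2)
      have htail : ∫ t in τ..x, kc t = ∫ t in τ..x, Ψ' t := by
        apply intervalIntegral.integral_congr
        intro u hu
        rw [Set.uIcc_of_le hxτ.le] at hu
        rw [hkcdef]; dsimp only; rw [if_neg (not_lt.2 hu.1)]
      have hsplit2 : (∫ t in (0:ℝ)..τ, Ψ' t) + ∫ t in τ..x, Ψ' t = ∫ t in (0:ℝ)..x, Ψ' t :=
        intervalIntegral.integral_add_adjacent_intervals
          (hΨ'iv 0 τ le_rfl hτV hτ0) (hΨ'iv τ x hτ0 hx.2 hxτ.le)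
      have hΨx := hrep x hx
      have hΨτ := hrep τ ⟨hτ0, hτV⟩
      have hψcx : ψc x = Ψ x := by
        rw [hψcdef]; dsimp only; rw [if_neg (not_le.2 hxτ)]
      rw [hψcx, hψc0, ← hsplit, hkczero τ hτ0 le_rfl, htail]
      linarith [hΨx, hΨτ, hsplit2, hτ]
  have htubec : InTube 0 V h f ψc := by
    intro x hx
    rw [hψcdef]; dsimp only
    split_ifs with hxτ
    · have hx1 : x ∈ Set.Icc (0:ℝ) t1 := ⟨hx.1, le_trans hxτ hτmem.2⟩
      have hb1 := hf0le x hx1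
      have hb2 := hfle x hx1
      rw [abs_le, hcdef]; constructor <;> linarith
    · exact htube x hx
  have hEint : IntervalIntegrable (fun u => cbar (Ψ' u)) volume 0 V :=
    key_integrable h V hh hV0 f cbar Ψ Ψ' hf ⟨⟨⟨hint, hrep⟩, htube⟩, hmin, huniq⟩
  have hck : (fun u => cbar (kc u)) = fun u => if u < τ then cbar 0 else cbar (Ψ' u) := by
    funext u; rw [hkcdef]; dsimp only; split_ifs <;> rfl
  have hckint : IntervalIntegrable (fun u => cbar (kc u)) volume 0 V := by
    rw [hck]
    have hsub3 : Set.uIcc τ V ⊆ Set.uIcc (0:ℝ) V := by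
      rw [Set.uIcc_of_le hV0.le, Set.uIcc_of_le hτV]
      exact Set.Icc_subset_Icc hτ0 le_rfl
    exact intervalIntegrable_if_lt hτ0 hτV intervalIntegrable_const (hEint.mono_set hsub3)
  have hle : energy 0 V cbar kc ≤ energy 0 V cbar Ψ' := by
    apply intervalIntegral.integral_mono_on hV0.le hckint hEint
    intro x _
    rw [hkcdef]; dsimp only
    split_ifs with h1
    · exact cbar_min hconv heven _
    · exact le_rfl
  have heq := huniq ψc kc ⟨⟨hkcint, hrepc⟩, htubec⟩ hle
  have h0eq := heq ⟨le_rfl, hV0.le⟩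
  rw [hψc0] at h0eq
  exact absurd h0eq.symm (ne_of_lt hΨ0lt)
end
end Aux
end
end

section
/- Let {(X_i, τ_i)}_{i≥1} be an i.i.d. sequence of pairs of non-negative random variables as in the context. Then, as t → ∞, (1/√t)·( (U_{Ñ(t)−1} − U_{[t/τ̄]}) − X̄·(Ñ(t) − [t/τ̄]) ) converges to 0 in probability, where [x] denotes the integer part of x. -/
open MeasureTheory Set Filter

noncomputable section

/-- `{(X_i, τ_i)}` is an i.i.d. sequence of pairs of non-negative random variables. -/
def IsIIDPairs {Ω : Type*} [MeasurableSpace Ω] (μ : MeasureTheory.Measure Ω)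
    (X τ : ℕ → Ω → ℝ) : Prop :=
  (∀ i, Measurable (X i)) ∧ (∀ i, Measurable (τ i)) ∧
  (∀ i ω, 0 ≤ X i ω) ∧ (∀ i ω, 0 ≤ τ i ω) ∧
  ProbabilityTheory.iIndepFun
    (fun i ω => (X i ω, τ i ω)) μ ∧
  (∀ i, MeasureTheory.Measure.map (fun ω => (X i ω, τ i ω)) μ =
    MeasureTheory.Measure.map (fun ω => (X 0 ω, τ 0 ω)) μ)

/-- `S_n = τ_1 + ⋯ + τ_n` (the sum of the first `n` of the `τ`'s). -/
def Spartial {Ω : Type*} (τ : ℕ → Ω → ℝ) (n : ℕ) (ω : Ω) : ℝ :=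
  ∑ k ∈ Finset.range n, τ k ω

/-- `U_n = X_1 + ⋯ + X_n` (the sum of the first `n` of the `X`'s). -/
def Upartial {Ω : Type*} (X : ℕ → Ω → ℝ) (n : ℕ) (ω : Ω) : ℝ :=
  ∑ k ∈ Finset.range n, X k ω

/-- `Ñ(t) = sup {n ≥ 0 : S_n ≤ t}`. -/
noncomputable def Ntilde {Ω : Type*} (τ : ℕ → Ω → ℝ) (t : ℝ) (ω : Ω) : ℕ :=
  sSup {n : ℕ | Spartial τ n ω ≤ t}

section AuxRenewal

open ProbabilityTheory

lemma window_cheb {Ω : Type*} [MeasurableSpace Ω] (μ : Measure Ω) [IsProbabilityMeasure μ]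
    (Z : ℕ → Ω → ℝ)
    (hind : iIndepFun Z μ)
    (hmem : ∀ i, MemLp (Z i) 2 μ)
    (hint : ∀ i, ∫ ω, Z i ω ∂μ = ∫ ω, Z 0 ω ∂μ)
    (hvar : ∀ i, variance (Z i) μ = variance (Z 0) μ)
    (Zb : ℝ) (hZb : Zb = ∫ ω, Z 0 ω ∂μ)
    (n p : ℕ) (c : ℝ) (hc : 0 < c) :
    μ {ω | c ≤ |∑ k ∈ Finset.Ico n p, (Z k ω - Zb)|}
      ≤ ENNReal.ofReal (((p - n : ℕ) : ℝ) * variance (Z 0) μ / c ^ 2) := by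
  set T : Ω → ℝ := ∑ k ∈ Finset.Ico n p, Z k with hT
  have hTmem : MemLp T 2 μ := memLp_finset_sum' _ (fun i _ => hmem i)
  have hTint : μ[T] = ((p - n : ℕ) : ℝ) * Zb := by
    simp only [hT, Finset.sum_apply]
    rw [integral_finset_sum _ (fun i _ => (hmem i).integrable one_le_two)]
    simp only [hint, hZb, Finset.sum_const, Nat.card_Ico, nsmul_eq_mul]
  have hTvar : variance T μ = ((p - n : ℕ) : ℝ) * variance (Z 0) μ := by
    rw [hT, IndepFun.variance_sum (fun i _ => hmem i)
      (fun i _ j _ hij => hind.indepFun hij)]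
    simp only [hvar, Finset.sum_const, Nat.card_Ico, nsmul_eq_mul]
  have h := meas_ge_le_variance_div_sq (μ := μ) hTmem hc
  have hset : {ω | c ≤ |T ω - μ[T]|} = {ω | c ≤ |∑ k ∈ Finset.Ico n p, (Z k ω - Zb)|} := by
    ext ω
    have : T ω = ∑ k ∈ Finset.Ico n p, Z k ω := by rw [hT]; simp [Finset.sum_apply]
    simp only [Set.mem_setOf_eq, this, hTint, Finset.sum_sub_distrib, Finset.sum_const,
      Nat.card_Ico, nsmul_eq_mul]
  rw [hset, hTvar] at h
  exact h

lemma sqrt_tendsto_atTop : Tendsto Real.sqrt atTop atTop := by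
  apply tendsto_atTop.mpr
  intro b
  filter_upwards [eventually_ge_atTop ((max b 0) ^ 2)] with x hx
  calc b ≤ max b 0 := le_max_left _ _
    _ = Real.sqrt ((max b 0) ^ 2) := (Real.sqrt_sq (le_max_right _ _)).symm
    _ ≤ Real.sqrt x := Real.sqrt_le_sqrt hx

lemma ev_sqrt_le (b c₁ c₂ : ℝ) (hb : 0 < b) :
    ∀ᶠ t : ℝ in atTop, c₁ * Real.sqrt t + c₂ ≤ t / b := by
  have h2 : Tendsto (fun t : ℝ => Real.sqrt t / b - c₁) atTop atTop := by
    apply tendsto_atTop_add_const_right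
    exact (sqrt_tendsto_atTop.atTop_div_const hb)
  have h : Tendsto (fun t : ℝ => Real.sqrt t * (Real.sqrt t / b - c₁)) atTop atTop :=
    sqrt_tendsto_atTop.atTop_mul_atTop₀ h2
  filter_upwards [h.eventually_ge_atTop c₂, eventually_ge_atTop (0 : ℝ)] with t ht ht0
  have hss : Real.sqrt t * Real.sqrt t = t := Real.mul_self_sqrt ht0
  have : Real.sqrt t * (Real.sqrt t / b - c₁) = t / b - c₁ * Real.sqrt t := by
    field_simp
    ring_nf
    nlinarith [hss]
  linarith [this ▸ ht]

lemma ev_const_le_sqrt (c d : ℝ) (hd : 0 < d) :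
    ∀ᶠ t : ℝ in atTop, c ≤ d * Real.sqrt t := by
  have h : Tendsto (fun t : ℝ => d * Real.sqrt t) atTop atTop :=
    sqrt_tendsto_atTop.const_mul_atTop hd
  exact h.eventually_ge_atTop c

end AuxRenewal

set_option maxHeartbeats 1600000 in
/-- **Lemma 5.1.** `(1/√t) ((U_{Ñ(t)-1} - U_{[t/τ̄]}) - X̄ (Ñ(t) - [t/τ̄])) → 0`
in probability as `t → ∞`. -/
theorem renewal_fluctuation_negligible
    {Ω : Type*} [MeasurableSpace Ω] (μ : Measure Ω) [IsProbabilityMeasure μ]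
    (X τ : ℕ → Ω → ℝ) (hiid : IsIIDPairs μ X τ)
    (hX2 : MemLp (X 0) 2 μ) (hτ2 : MemLp (τ 0) 2 μ)
    (Xbar τbar σX στ σXτ : ℝ)
    (hXbar : Xbar = ∫ ω, X 0 ω ∂μ) (hτbar : τbar = ∫ ω, τ 0 ω ∂μ)
    (hXbar0 : Xbar ≠ 0) (hτbar0 : τbar ≠ 0)
    (hσX : σX = Real.sqrt (ProbabilityTheory.variance (X 0) μ))
    (hστ : στ = Real.sqrt (ProbabilityTheory.variance (τ 0) μ))
    (hσX0 : σX ≠ 0) (hστ0 : στ ≠ 0)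
    (hσXτ : σXτ = ∫ ω, (X 0 ω - Xbar) * (τ 0 ω - τbar) ∂μ)
    :
    ∀ ε : ℝ, 0 < ε →
      Filter.Tendsto
        (fun t : ℝ => μ {ω | ε ≤
          |(1 / Real.sqrt t) *
            ((Upartial X (Ntilde τ t ω - 1) ω - Upartial X ⌊t / τbar⌋₊ ω) -
              Xbar * ((Ntilde τ t ω : ℝ) - (⌊t / τbar⌋₊ : ℝ)))|})
        Filter.atTop (nhds 0) := by
  classical
  obtain ⟨hXm, hτm, hXpos, hτpos, hindep, hident⟩ := hiid
  have hpairm : ∀ i, Measurable fun ω => (X i ω, τ i ω) := fun i => (hXm i).prodMk (hτm i)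
  have hidpair : ∀ i, ProbabilityTheory.IdentDistrib (fun ω => (X i ω, τ i ω))
      (fun ω => (X 0 ω, τ 0 ω)) μ μ :=
    fun i => ⟨(hpairm i).aemeasurable, (hpairm 0).aemeasurable, hident i⟩
  have hidX : ∀ i, ProbabilityTheory.IdentDistrib (X i) (X 0) μ μ :=
    fun i => (hidpair i).comp measurable_fst
  have hidτ : ∀ i, ProbabilityTheory.IdentDistrib (τ i) (τ 0) μ μ :=
    fun i => (hidpair i).comp measurable_snd
  have hmemX : ∀ i, MemLp (X i) 2 μ := fun i => (hidX i).symm.memLp_snd hX2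
  have hmemτ : ∀ i, MemLp (τ i) 2 μ := fun i => (hidτ i).symm.memLp_snd hτ2
  have hintX : ∀ i, ∫ ω, X i ω ∂μ = ∫ ω, X 0 ω ∂μ := fun i => (hidX i).integral_eq
  have hintτ : ∀ i, ∫ ω, τ i ω ∂μ = ∫ ω, τ 0 ω ∂μ := fun i => (hidτ i).integral_eq
  have hvarX : ∀ i, ProbabilityTheory.variance (X i) μ = ProbabilityTheory.variance (X 0) μ :=
    fun i => (hidX i).variance_eq
  have hvarτ : ∀ i, ProbabilityTheory.variance (τ i) μ = ProbabilityTheory.variance (τ 0) μ :=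
    fun i => (hidτ i).variance_eq
  have hindX : ProbabilityTheory.iIndepFun
      X μ := hindep.comp (fun _ => Prod.fst) (fun _ => measurable_fst)
  have hindτ : ProbabilityTheory.iIndepFun
      τ μ := hindep.comp (fun _ => Prod.snd) (fun _ => measurable_snd)
  have hXb_pos : 0 < Xbar := by
    rcases lt_or_eq_of_le (hXbar ▸ integral_nonneg (fun ω => hXpos 0 ω)) with h | h
    · exact h
    · exact absurd h.symm hXbar0
  have hτb_pos : 0 < τbar := by
    rcases lt_or_eq_of_le (hτbar ▸ integral_nonneg (fun ω => hτpos 0 ω)) with h | h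
    · exact h
    · exact absurd h.symm hτbar0
  set vX := ProbabilityTheory.variance (X 0) μ with hvXdef
  set vτ := ProbabilityTheory.variance (τ 0) μ with hvτdef
  have hvX0 : 0 ≤ vX := ProbabilityTheory.variance_nonneg _ _
  have hvτ0 : 0 ≤ vτ := ProbabilityTheory.variance_nonneg _ _
  intro ε hε
  rw [ENNReal.tendsto_nhds_zero]
  intro η hη
  obtain ⟨r, hr0, hrη⟩ : ∃ r : ℝ, 0 < r ∧ ENNReal.ofReal r ≤ η := by
    rcases eq_or_ne η ⊤ with h | h
    · exact ⟨1, one_pos, by simp [h]⟩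
    · exact ⟨η.toReal, ENNReal.toReal_pos hη.ne' h, by rw [ENNReal.ofReal_toReal h]⟩
  -- constants
  set K : ℝ := max 2 (Real.sqrt (32 * vτ / (τbar ^ 3 * r))) with hKdef
  have hK2 : (2 : ℝ) ≤ K := le_max_left _ _
  have hK0 : (0 : ℝ) < K := lt_of_lt_of_le two_pos hK2
  have hKbig : 8 * vτ / (τbar ^ 3 * K ^ 2) ≤ r / 4 := by
    have hnn : (0 : ℝ) ≤ 32 * vτ / (τbar ^ 3 * r) := by positivity
    have h32 : 32 * vτ / (τbar ^ 3 * r) ≤ K ^ 2 := by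
      have h1 := le_max_right 2 (Real.sqrt (32 * vτ / (τbar ^ 3 * r)))
      nlinarith [Real.sq_sqrt hnn, Real.sqrt_nonneg (32 * vτ / (τbar ^ 3 * r))]
    have h32' : 32 * vτ ≤ K ^ 2 * (τbar ^ 3 * r) := by
      rw [div_le_iff₀ (by positivity)] at h32; linarith
    rw [div_le_div_iff₀ (by positivity) (by norm_num : (0:ℝ) < 4)]
    nlinarith
  set δ : ℝ := ε / (8 * Xbar) with hδdef
  have hδ0 : 0 < δ := by positivity
  set J : ℕ := ⌈(2 * K + 3) / δ⌉₊ with hJdef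
  have hJge : (2 * K + 3) / δ ≤ (J : ℝ) := Nat.le_ceil _
  set C : ℝ := K + (J : ℝ) * δ + (J : ℝ) + 1 with hCdef
  have hC0 : 0 < C := by positivity
  -- eventual facts
  have E2 : ∀ᶠ t : ℝ in atTop, K * Real.sqrt t + 4 ≤ t / τbar := ev_sqrt_le τbar K 4 hτb_pos
  have E3 : ∀ᶠ t : ℝ in atTop,
      ((J : ℝ) + 1) * 64 * C * vX / ε ^ 2 ≤ (r / 4) * Real.sqrt t :=
    ev_const_le_sqrt _ _ (by positivity)
  have E4 : ∀ᶠ t : ℝ in atTop, 8 * Xbar ≤ ε * Real.sqrt t := ev_const_le_sqrt _ _ hε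
  filter_upwards [eventually_ge_atTop (1 : ℝ), E2, E3, E4] with t ht1 ht2 ht3 ht4
  -- basic facts about t
  have ht0 : (0 : ℝ) ≤ t := le_trans zero_le_one ht1
  set s : ℝ := Real.sqrt t with hsdef
  have hs1 : 1 ≤ s := by
    rw [hsdef, show (1:ℝ) = Real.sqrt 1 by simp]
    exact Real.sqrt_le_sqrt ht1
  have hs0 : 0 < s := lt_of_lt_of_le one_pos hs1
  have hss : s * s = t := Real.mul_self_sqrt ht0
  set m : ℕ := ⌊t / τbar⌋₊ with hmdef
  set a : ℕ := ⌈K * s⌉₊ with hadef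
  set L : ℕ := ⌈δ * s⌉₊ with hLdef
  have hL1 : 1 ≤ L := Nat.one_le_iff_ne_zero.mpr (by
    simp only [hLdef, ne_eq, Nat.ceil_eq_zero, not_le]
    positivity)
  have haK : K * s ≤ (a : ℝ) := Nat.le_ceil _
  have haK' : (a : ℝ) ≤ K * s + 1 := le_of_lt (Nat.ceil_lt_add_one (by positivity))
  have hmt : (m : ℝ) ≤ t / τbar := Nat.floor_le (by positivity)
  have hmt' : t / τbar < (m : ℝ) + 1 := Nat.lt_floor_add_one _
  have hLd : δ * s ≤ (L : ℝ) := Nat.le_ceil _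
  have hLd' : (L : ℝ) ≤ δ * s + 1 := le_of_lt (Nat.ceil_lt_add_one (by positivity))
  -- a + 2 ≤ m
  have ham : a + 2 ≤ m := by
    have : (a : ℝ) + 2 < (m : ℝ) + 1 := by
      have h1 : (a : ℝ) + 2 ≤ K * s + 3 := by linarith
      have h2 : K * s + 4 ≤ t / τbar := ht2
      linarith
    exact_mod_cast Nat.lt_succ_iff.mp (by exact_mod_cast this)
  have ham' : a ≤ m := le_trans (Nat.le_add_right a 2) ham
  -- key events
  set n₁ : ℕ := m - a + 1 with hn₁def
  set n₂ : ℕ := m + a + 2 with hn₂def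
  have hn₁cast : (n₁ : ℝ) = (m : ℝ) - (a : ℝ) + 1 := by
    rw [hn₁def]; push_cast [Nat.cast_sub ham']; ring
  set A1 : Set Ω := {ω | Spartial τ n₂ ω ≤ t} with hA1def
  set A2 : Set Ω := {ω | t < Spartial τ n₁ ω} with hA2def
  set b : ℕ → ℕ := fun j => (m - a) + j * L with hbdef
  set Ej : ℕ → Set Ω := fun j =>
    {ω | ε * s / 8 ≤ |∑ k ∈ Finset.Ico (min (b j) m) (max (b j) m), (X k ω - Xbar)|} with hEdef
  set B : Set Ω := ⋃ j ∈ Finset.range (J + 1), Ej j with hBdef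
  -- monotonicity of partial sums
  have hSmono : ∀ ω, Monotone fun n => Spartial τ n ω := by
    intro ω i j hij
    exact Finset.sum_le_sum_of_subset_of_nonneg (Finset.range_subset_range.mpr hij)
      (fun k _ _ => hτpos k ω)
  have hUmono : ∀ ω, Monotone fun n => Upartial X n ω := by
    intro ω i j hij
    exact Finset.sum_le_sum_of_subset_of_nonneg (Finset.range_subset_range.mpr hij)
      (fun k _ _ => hXpos k ω)
  -- handy derived constants facts
  have hr4 : (0:ℝ) < r / 4 := by linarith
  have hKb' : 8 * vτ ≤ r / 4 * (τbar ^ 3 * K ^ 2) := by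
    rw [div_le_iff₀ (by positivity)] at hKbig
    linarith
  have htpos : (0:ℝ) < t := lt_of_lt_of_le one_pos ht1
  -- deterministic inclusion
  have hsub : {ω | ε ≤
      |(1 / s) *
        ((Upartial X (Ntilde τ t ω - 1) ω - Upartial X m ω) -
          Xbar * ((Ntilde τ t ω : ℝ) - (m : ℝ)))|} ⊆ A1 ∪ (A2 ∪ B) := by
    intro ω hω
    simp only [Set.mem_setOf_eq] at hω
    by_contra hcon
    simp only [Set.mem_union, not_or] at hcon
    obtain ⟨hc1, hc2, hc3⟩ := hcon
    have hA1' : t < Spartial τ n₂ ω := lt_of_not_ge hc1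
    have hA2' : Spartial τ n₁ ω ≤ t := le_of_not_gt hc2
    have hB' : ∀ j, j ≤ J →
        |∑ k ∈ Finset.Ico (min (b j) m) (max (b j) m), (X k ω - Xbar)| < ε * s / 8 := by
      intro j hj
      by_contra hcc
      apply hc3
      rw [hBdef]
      refine Set.mem_biUnion (Finset.mem_range.mpr (Nat.lt_succ_of_le hj)) ?_
      rw [hEdef]
      exact le_of_not_gt hcc
    -- analysis of N
    set N : ℕ := Ntilde τ t ω with hNdef
    have hbddS : BddAbove {n : ℕ | Spartial τ n ω ≤ t} := by
      refine ⟨n₂, fun y hy => ?_⟩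
      by_contra hyn
      push_neg at hyn
      exact absurd (le_trans (hSmono ω (le_of_lt hyn)) hy) (not_le.mpr hA1')
    have hneS : {n : ℕ | Spartial τ n ω ≤ t}.Nonempty := ⟨n₁, hA2'⟩
    have hNmem : Spartial τ N ω ≤ t := Nat.sSup_mem hneS hbddS
    have hNlb : n₁ ≤ N := le_csSup hbddS hA2'
    have hNub : N < n₂ := by
      by_contra hcc
      push_neg at hcc
      exact absurd (le_trans (hSmono ω hcc) hNmem) (not_le.mpr hA1')
    have hN1 : 1 ≤ N := by omega
    set n : ℕ := N - 1 with hndef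
    have hNn : N = n + 1 := by omega
    have hnlo : m - a ≤ n := by omega
    have hnhi : n ≤ m + a := by omega
    -- block index
    set x : ℕ := n - (m - a) with hxdef
    have hxval : (m - a) + x = n := Nat.add_sub_cancel' hnlo
    have hx2a : x ≤ 2 * a := by omega
    set j : ℕ := x / L with hjdef
    have hL0 : 0 < L := hL1
    have hbj_le : b j ≤ n := by
      simp only [hbdef]
      calc (m - a) + j * L ≤ (m - a) + x :=
            Nat.add_le_add_left (by rw [hjdef]; exact Nat.div_mul_le_self x L) _
        _ = n := hxval
    have hxjL : x < (j + 1) * L := by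
      have hdm := Nat.div_add_mod x L
      have hmod := Nat.mod_lt x hL0
      calc x = L * (x / L) + x % L := hdm.symm
        _ < L * (x / L) + L := Nat.add_lt_add_left hmod _
        _ = (x / L + 1) * L := by ring
        _ = (j + 1) * L := by rw [hjdef]
    have hn_lt : n < b (j + 1) := by
      simp only [hbdef]
      calc n = (m - a) + x := hxval.symm
        _ < (m - a) + (j + 1) * L := Nat.add_lt_add_left hxjL _
    have hjJ : j + 1 ≤ J := by
      have hjL : j * L ≤ x := by rw [hjdef]; exact Nat.div_mul_le_self x L
      have h2a1 : 2 * (a : ℝ) + 1 ≤ (J : ℝ) * (L : ℝ) := by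
        have h1 : (2 * K + 3) / δ * (δ * s) ≤ (J : ℝ) * (L : ℝ) :=
          mul_le_mul hJge hLd (by positivity) (Nat.cast_nonneg J)
        have h2 : (2 * K + 3) / δ * (δ * s) = (2 * K + 3) * s := by
          field_simp
        have h3 : 2 * (a : ℝ) + 1 ≤ 2 * (K * s) + 3 := by linarith only [haK']
        have h4 : 2 * (K * s) + 3 ≤ (2 * K + 3) * s := by linarith only [hs1]
        rw [h2] at h1
        linarith only [h1, h3, h4]
      have hlt : (j : ℝ) * (L : ℝ) < (J : ℝ) * (L : ℝ) := by
        calc (j : ℝ) * (L : ℝ) ≤ (x : ℝ) := by exact_mod_cast hjL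
          _ ≤ 2 * (a : ℝ) := by exact_mod_cast hx2a
          _ < (J : ℝ) * (L : ℝ) := by linarith only [h2a1]
      have hjJ' : (j : ℝ) < (J : ℝ) := lt_of_mul_lt_mul_right hlt (Nat.cast_nonneg L)
      have : j < J := by exact_mod_cast hjJ'
      omega
    -- real arithmetic with centered sums
    set D : ℕ → ℝ := fun p => Upartial X p ω - (p : ℝ) * Xbar with hDdef
    have hDdiff : ∀ p q : ℕ, p ≤ q →
        D q - D p = ∑ k ∈ Finset.Ico p q, (X k ω - Xbar) := by
      intro p q hpq
      rw [Finset.sum_sub_distrib, Finset.sum_const, Nat.card_Ico,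
        Finset.sum_Ico_eq_sub _ hpq]
      simp only [hDdef, Upartial, nsmul_eq_mul, Nat.cast_sub hpq]
      ring
    have hwin : ∀ j', j' ≤ J → |D (b j') - D m| < ε * s / 8 := by
      intro j' hj'
      rcases le_total (b j') m with h | h
      · have hh := hB' j' hj'
        rw [min_eq_left h, max_eq_right h, ← hDdiff _ _ h] at hh
        rwa [abs_sub_comm]
      · have hh := hB' j' hj'
        rwa [min_eq_right h, max_eq_left h, ← hDdiff _ _ h] at hh
    have hbsucc : b (j + 1) = b j + L := by simp only [hbdef]; ring
    have hb1n : (b (j + 1) : ℝ) ≤ (n : ℝ) + (L : ℝ) := by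
      have : b (j + 1) ≤ n + L := by omega
      exact_mod_cast this
    have hnb : (n : ℝ) ≤ (b j : ℝ) + (L : ℝ) := by
      have : n ≤ b j + L := by omega
      exact_mod_cast this
    have hbjn : (b j : ℝ) ≤ (n : ℝ) := by exact_mod_cast hbj_le
    have hnb1 : (n : ℝ) ≤ (b (j + 1) : ℝ) := by
      have : n ≤ b (j + 1) := le_of_lt hn_lt
      exact_mod_cast this
    have hDn : |D n - D m| ≤ ε * s / 8 + Xbar * (L : ℝ) := by
      have hup : D n - D m ≤ ε * s / 8 + Xbar * (L : ℝ) := by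
        have hU : Upartial X n ω ≤ Upartial X (b (j + 1)) ω :=
          hUmono ω (le_of_lt hn_lt)
        have h1 : D n - D m ≤ (D (b (j + 1)) - D m) + ((b (j + 1) : ℝ) - (n : ℝ)) * Xbar := by
          simp only [hDdef]
          linarith only [hU]
        have h2 : ((b (j + 1) : ℝ) - (n : ℝ)) * Xbar ≤ (L : ℝ) * Xbar :=
          mul_le_mul_of_nonneg_right (by linarith only [hb1n]) (le_of_lt hXb_pos)
        have h3 := hwin (j + 1) hjJ
        have h3' : D (b (j + 1)) - D m ≤ ε * s / 8 := (abs_lt.mp h3).2.le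
        calc D n - D m ≤ (D (b (j + 1)) - D m) + ((b (j + 1) : ℝ) - (n : ℝ)) * Xbar := h1
          _ ≤ ε * s / 8 + (L : ℝ) * Xbar := add_le_add h3' h2
          _ = ε * s / 8 + Xbar * (L : ℝ) := by ring
      have hdown : -(ε * s / 8 + Xbar * (L : ℝ)) ≤ D n - D m := by
        have hU : Upartial X (b j) ω ≤ Upartial X n ω := hUmono ω hbj_le
        have h1 : (D (b j) - D m) + ((b j : ℝ) - (n : ℝ)) * Xbar ≤ D n - D m := by
          simp only [hDdef]
          linarith only [hU]
        have h2 : -(L : ℝ) * Xbar ≤ ((b j : ℝ) - (n : ℝ)) * Xbar :=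
          mul_le_mul_of_nonneg_right (by linarith only [hnb]) (le_of_lt hXb_pos)
        have h3 := hwin j (le_trans (Nat.le_succ j) hjJ)
        have h3' : -(ε * s / 8) ≤ D (b j) - D m := (abs_lt.mp h3).1.le
        calc -(ε * s / 8 + Xbar * (L : ℝ)) = -(ε * s / 8) + -(L : ℝ) * Xbar := by ring
          _ ≤ (D (b j) - D m) + ((b j : ℝ) - (n : ℝ)) * Xbar := add_le_add h3' h2
          _ ≤ D n - D m := h1
      exact abs_le.mpr ⟨hdown, hup⟩
    -- conclude
    have hexpr : (Upartial X n ω - Upartial X m ω) - Xbar * ((N : ℝ) - (m : ℝ))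
        = D n - D m - Xbar := by
      have h2 : (N : ℝ) = (n : ℝ) + 1 := by exact_mod_cast hNn
      simp only [hDdef]
      rw [h2]
      ring
    have habs : |D n - D m - Xbar| < ε * s := by
      have h1 : |D n - D m - Xbar| ≤ |D n - D m| + |Xbar| := by
        rw [sub_eq_add_neg]
        exact (abs_add_le _ _).trans (by rw [abs_neg])
      have h1' : |Xbar| = Xbar := abs_of_pos hXb_pos
      have h2 : Xbar * (L : ℝ) ≤ ε * s / 8 + Xbar := by
        have hc1 : Xbar * (L : ℝ) ≤ Xbar * (δ * s + 1) :=
          mul_le_mul_of_nonneg_left hLd' (le_of_lt hXb_pos)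
        have hδX : Xbar * (δ * s) = ε * s / 8 := by
          rw [hδdef]; field_simp
        linarith only [hc1, hδX]
      have h3 : 2 * Xbar ≤ ε * s / 4 := by linarith only [ht4]
      have h5 : 0 < ε * s := by positivity
      calc |D n - D m - Xbar| ≤ |D n - D m| + |Xbar| := h1
        _ = |D n - D m| + Xbar := by rw [h1']
        _ ≤ (ε * s / 8 + Xbar * (L : ℝ)) + Xbar := by linarith only [hDn]
        _ ≤ ε * s / 8 + ε * s / 8 + 2 * Xbar := by linarith only [h2]
        _ ≤ ε * s / 4 + ε * s / 4 := by linarith only [h3]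
        _ < ε * s := by linarith only [h5]
    have hfin : |(1 / s) * ((Upartial X n ω - Upartial X m ω)
        - Xbar * ((N : ℝ) - (m : ℝ)))| < ε := by
      rw [hexpr, abs_mul, abs_of_pos (show (0:ℝ) < 1 / s by positivity),
        one_div, inv_mul_lt_iff₀ hs0]
      calc |D n - D m - Xbar| < ε * s := habs
        _ = s * ε := by ring
    exact absurd hω (not_le.mpr hfin)
  -- measure bound for A1
  have hbA1 : μ A1 ≤ ENNReal.ofReal (r / 4) := by
    have hg : (0 : ℝ) < τbar * (K * s) := by positivity
    have hdiv : t / τbar * τbar = t := div_mul_cancel₀ t (ne_of_gt hτb_pos)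
    have hsubA : A1 ⊆ {ω | τbar * (K * s) ≤ |∑ k ∈ Finset.Ico 0 n₂, (τ k ω - τbar)|} := by
      intro ω hωA
      have hS : Spartial τ n₂ ω ≤ t := hωA
      have hsum : ∑ k ∈ Finset.Ico 0 n₂, (τ k ω - τbar)
          = Spartial τ n₂ ω - (n₂ : ℝ) * τbar := by
        rw [Finset.sum_sub_distrib, Finset.sum_const, Nat.card_Ico, Nat.sub_zero,
          nsmul_eq_mul, Spartial, Finset.range_eq_Ico]
      have hn₂τ : t + τbar * (K * s) ≤ (n₂ : ℝ) * τbar := by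
        have h1 : (n₂ : ℝ) = (m : ℝ) + (a : ℝ) + 2 := by rw [hn₂def]; push_cast; ring
        have h3 : t / τbar + K * s + 1 ≤ (n₂ : ℝ) := by linarith only [h1, hmt', haK]
        have h4 : (t / τbar + K * s + 1) * τbar ≤ (n₂ : ℝ) * τbar :=
          mul_le_mul_of_nonneg_right h3 (le_of_lt hτb_pos)
        rw [add_mul, add_mul, hdiv] at h4
        linarith only [h4, hτb_pos]
      have h6 : ∑ k ∈ Finset.Ico 0 n₂, (τ k ω - τbar) ≤ -(τbar * (K * s)) := by
        rw [hsum]; linarith only [hS, hn₂τ]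
      show τbar * (K * s) ≤ |∑ k ∈ Finset.Ico 0 n₂, (τ k ω - τbar)|
      calc τbar * (K * s) ≤ -(∑ k ∈ Finset.Ico 0 n₂, (τ k ω - τbar)) := by
            linarith only [h6]
        _ ≤ |∑ k ∈ Finset.Ico 0 n₂, (τ k ω - τbar)| := neg_le_abs _
    refine le_trans (measure_mono hsubA) (le_trans
      (window_cheb μ τ hindτ hmemτ hintτ hvarτ τbar hτbar 0 n₂ _ hg)
      (ENNReal.ofReal_le_ofReal ?_))
    rw [← hvτdef]
    have hn₂le : ((n₂ - 0 : ℕ) : ℝ) * τbar ≤ 2 * t := by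
      rw [Nat.sub_zero]
      have h1 : (n₂ : ℝ) = (m : ℝ) + (a : ℝ) + 2 := by rw [hn₂def]; push_cast; ring
      have h2 : (n₂ : ℝ) ≤ t / τbar + K * s + 3 := by linarith only [h1, hmt, haK']
      have h4 : (n₂ : ℝ) ≤ 2 * (t / τbar) := by linarith only [h2, ht2]
      have h6 := mul_le_mul_of_nonneg_right h4 (le_of_lt hτb_pos)
      rw [mul_assoc, hdiv] at h6
      exact h6
    have hsq : (τbar * (K * s)) ^ 2 = τbar ^ 2 * K ^ 2 * t := by
      have h7 : (τbar * (K * s)) ^ 2 = τbar ^ 2 * K ^ 2 * (s * s) := by ring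
      rw [h7, hss]
    rw [hsq, div_le_iff₀ (by positivity)]
    have hA : ((n₂ - 0 : ℕ) : ℝ) * τbar * vτ ≤ 2 * t * vτ :=
      mul_le_mul_of_nonneg_right hn₂le hvτ0
    have hB2 : 8 * vτ * t ≤ r / 4 * (τbar ^ 3 * K ^ 2) * t :=
      mul_le_mul_of_nonneg_right hKb' (le_of_lt htpos)
    have hvτt : (0:ℝ) ≤ vτ * t := mul_nonneg hvτ0 (le_of_lt htpos)
    have hgoal' : ((n₂ - 0 : ℕ) : ℝ) * vτ * τbar ≤ r / 4 * (τbar ^ 2 * K ^ 2 * t) * τbar := by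
      linarith only [hA, hB2, hvτt]
    exact le_of_mul_le_mul_right hgoal' hτb_pos
  -- measure bound for A2
  have hbA2 : μ A2 ≤ ENNReal.ofReal (r / 4) := by
    have hdiv : t / τbar * τbar = t := div_mul_cancel₀ t (ne_of_gt hτb_pos)
    have hKs2 : (2 : ℝ) ≤ K * s := by
      have := mul_le_mul hK2 hs1 zero_le_one (le_of_lt hK0)
      linarith only [this]
    have hKs0 : (0 : ℝ) ≤ K * s := by linarith only [hKs2]
    have hg : (0 : ℝ) < τbar * (K * s - 1) :=
      mul_pos hτb_pos (by linarith only [hKs2])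
    have hn₁bd : (n₁ : ℝ) ≤ t / τbar - K * s + 1 := by
      rw [hn₁cast]; linarith only [hmt, haK]
    have hsubA : A2 ⊆ {ω | τbar * (K * s - 1) ≤ |∑ k ∈ Finset.Ico 0 n₁, (τ k ω - τbar)|} := by
      intro ω hωA
      have hS : t < Spartial τ n₁ ω := hωA
      have hsum : ∑ k ∈ Finset.Ico 0 n₁, (τ k ω - τbar)
          = Spartial τ n₁ ω - (n₁ : ℝ) * τbar := by
        rw [Finset.sum_sub_distrib, Finset.sum_const, Nat.card_Ico, Nat.sub_zero,
          nsmul_eq_mul, Spartial, Finset.range_eq_Ico]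
      have hn₁τ : (n₁ : ℝ) * τbar ≤ t - τbar * (K * s - 1) := by
        have h4 : (n₁ : ℝ) * τbar ≤ (t / τbar - K * s + 1) * τbar :=
          mul_le_mul_of_nonneg_right hn₁bd (le_of_lt hτb_pos)
        rw [add_mul, sub_mul, hdiv, one_mul] at h4
        linarith only [h4]
      have h6 : τbar * (K * s - 1) ≤ ∑ k ∈ Finset.Ico 0 n₁, (τ k ω - τbar) := by
        rw [hsum]; linarith only [hS, hn₁τ]
      exact le_trans h6 (le_abs_self _)
    refine le_trans (measure_mono hsubA) (le_trans
      (window_cheb μ τ hindτ hmemτ hintτ hvarτ τbar hτbar 0 n₁ _ hg)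
      (ENNReal.ofReal_le_ofReal ?_))
    rw [← hvτdef]
    have hn₁le : ((n₁ - 0 : ℕ) : ℝ) * τbar ≤ 2 * t := by
      rw [Nat.sub_zero]
      have h4 : (n₁ : ℝ) ≤ 2 * (t / τbar) := by linarith only [hn₁bd, ht2, hKs0]
      have h6 := mul_le_mul_of_nonneg_right h4 (le_of_lt hτb_pos)
      rw [mul_assoc, hdiv] at h6
      exact h6
    have hs2t : s ^ 2 = t := by rw [sq]; exact hss
    have hsq : τbar ^ 2 * K ^ 2 * t / 4 ≤ (τbar * (K * s - 1)) ^ 2 := by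
      have h7 : K * s / 2 ≤ K * s - 1 := by linarith only [hKs2]
      have h8 : (0:ℝ) ≤ K * s / 2 := by linarith only [hKs2]
      have h9 : (K * s / 2) ^ 2 ≤ (K * s - 1) ^ 2 := pow_le_pow_left₀ h8 h7 2
      have h10 : τbar ^ 2 * (K * s / 2) ^ 2 ≤ τbar ^ 2 * (K * s - 1) ^ 2 :=
        mul_le_mul_of_nonneg_left h9 (sq_nonneg τbar)
      have h11 : τbar ^ 2 * (K * s / 2) ^ 2 = τbar ^ 2 * K ^ 2 * t / 4 := by
        rw [← hs2t]; ring
      have h12 : (τbar * (K * s - 1)) ^ 2 = τbar ^ 2 * (K * s - 1) ^ 2 := by ring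
      rw [h12, ← h11]
      exact h10
    rw [div_le_iff₀ (by positivity)]
    have hA : ((n₁ - 0 : ℕ) : ℝ) * τbar * vτ ≤ 2 * t * vτ :=
      mul_le_mul_of_nonneg_right hn₁le hvτ0
    have hB2 : 8 * vτ * t ≤ r / 4 * (τbar ^ 3 * K ^ 2) * t :=
      mul_le_mul_of_nonneg_right hKb' (le_of_lt htpos)
    have hC2 : r / 4 * (τbar ^ 2 * K ^ 2 * t / 4) ≤ r / 4 * (τbar * (K * s - 1)) ^ 2 :=
      mul_le_mul_of_nonneg_left hsq (le_of_lt hr4)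
    have hC2' := mul_le_mul_of_nonneg_left hC2 (le_of_lt hτb_pos)
    have hvτt : (0:ℝ) ≤ vτ * t := mul_nonneg hvτ0 (le_of_lt htpos)
    have hgoal' : ((n₁ - 0 : ℕ) : ℝ) * vτ * τbar
        ≤ r / 4 * (τbar * (K * s - 1)) ^ 2 * τbar := by
      linarith only [hA, hB2, hC2', hvτt]
    exact le_of_mul_le_mul_right hgoal' hτb_pos
  -- measure bound for B
  have hbB : μ B ≤ ENNReal.ofReal (r / 4) := by
    have hterm : ∀ j ∈ Finset.range (J + 1),
        μ (Ej j) ≤ ENNReal.ofReal (64 * C * vX / (ε ^ 2 * s)) := by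
      intro j hj
      have hj' : j ≤ J := Nat.lt_succ_iff.mp (Finset.mem_range.mp hj)
      have hc : 0 < ε * s / 8 := by positivity
      have hEj : Ej j = {ω | ε * s / 8 ≤
          |∑ k ∈ Finset.Ico (min (b j) m) (max (b j) m), (X k ω - Xbar)|} := by
        rw [hEdef]
      rw [hEj]
      refine le_trans
        (window_cheb μ X hindX hmemX hintX hvarX Xbar hXbar (min (b j) m) (max (b j) m)
          (ε * s / 8) hc)
        (ENNReal.ofReal_le_ofReal ?_)
      rw [← hvXdef]
      have hwn : max (b j) m - min (b j) m ≤ a + J * L := by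
        have hjL : j * L ≤ J * L := Nat.mul_le_mul_right _ hj'
        have hbm : b j = (m - a) + j * L := by simp only [hbdef]
        rcases le_total (b j) m with h | h
        · rw [max_eq_right h, min_eq_left h]
          omega
        · rw [max_eq_left h, min_eq_right h]
          omega
      have hwr : ((max (b j) m - min (b j) m : ℕ) : ℝ) ≤ C * s := by
        have hJnn : (0:ℝ) ≤ (J : ℝ) := Nat.cast_nonneg J
        have hJ1 : (0:ℝ) ≤ (J : ℝ) + 1 := by linarith only [hJnn]
        have h2 : (J : ℝ) * (L : ℝ) ≤ (J : ℝ) * (δ * s + 1) :=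
          mul_le_mul_of_nonneg_left hLd' hJnn
        have h3 : ((J : ℝ) + 1) * 1 ≤ ((J : ℝ) + 1) * s :=
          mul_le_mul_of_nonneg_left hs1 hJ1
        have h1 : ((a + J * L : ℕ) : ℝ) ≤ C * s := by
          push_cast
          rw [hCdef]
          linarith only [haK', h2, h3]
        calc ((max (b j) m - min (b j) m : ℕ) : ℝ) ≤ ((a + J * L : ℕ) : ℝ) :=
              Nat.cast_le.mpr hwn
          _ ≤ C * s := h1
      rw [div_le_div_iff₀ (by positivity) (by positivity)]
      have hkey : ((max (b j) m - min (b j) m : ℕ) : ℝ) * (vX * (ε ^ 2 * s))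
          ≤ (C * s) * (vX * (ε ^ 2 * s)) :=
        mul_le_mul_of_nonneg_right hwr (by positivity)
      exact le_trans (le_of_eq (by ring)) (le_trans hkey (le_of_eq (by ring)))
    calc μ B ≤ ∑ j ∈ Finset.range (J + 1), μ (Ej j) := by
          rw [hBdef]; exact measure_biUnion_finset_le _ _
      _ ≤ (Finset.range (J + 1)).card • ENNReal.ofReal (64 * C * vX / (ε ^ 2 * s)) :=
          Finset.sum_le_card_nsmul _ _ _ hterm
      _ = ((J + 1 : ℕ) : ENNReal) * ENNReal.ofReal (64 * C * vX / (ε ^ 2 * s)) := by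
          rw [Finset.card_range, nsmul_eq_mul]
      _ = ENNReal.ofReal (((J : ℝ) + 1) * (64 * C * vX / (ε ^ 2 * s))) := by
          rw [ENNReal.ofReal_mul (show (0:ℝ) ≤ (J : ℝ) + 1 by positivity)]
          congr 1
          rw [← ENNReal.ofReal_natCast (J + 1)]
          push_cast
          ring_nf
      _ ≤ ENNReal.ofReal (r / 4) := by
          apply ENNReal.ofReal_le_ofReal
          have ht3' : ((J : ℝ) + 1) * 64 * C * vX / ε ^ 2 ≤ r / 4 * s := ht3
          apply le_of_mul_le_mul_right ?_ hs0
          calc ((J : ℝ) + 1) * (64 * C * vX / (ε ^ 2 * s)) * s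
              = ((J : ℝ) + 1) * 64 * C * vX / ε ^ 2 := by
                field_simp
            _ ≤ r / 4 * s := ht3'
  -- put everything together
  refine le_trans (measure_mono hsub) (le_trans ?_ hrη)
  calc μ (A1 ∪ (A2 ∪ B)) ≤ μ A1 + μ (A2 ∪ B) := measure_union_le _ _
    _ ≤ μ A1 + (μ A2 + μ B) := add_le_add_right (measure_union_le _ _) _
    _ ≤ ENNReal.ofReal (r / 4) + (ENNReal.ofReal (r / 4) + ENNReal.ofReal (r / 4)) :=
        add_le_add hbA1 (add_le_add hbA2 hbB)
    _ = ENNReal.ofReal (r / 4 + (r / 4 + r / 4)) := by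
        rw [ENNReal.ofReal_add (by positivity) (by positivity),
          ENNReal.ofReal_add (by positivity) (by positivity)]
    _ ≤ ENNReal.ofReal r := ENNReal.ofReal_le_ofReal (by linarith only [hr0])
end
end

section
/- Let h > 0, let w be a continuous function, let 0 < a < b and c, d ∈ ℝ with |c − w(a)| ≤ h/2, |d − w(b)| ≤ h/2, let C : ℝ → ℝ be strictly convex, and let U be the unique minimizer of ∫_a^b C(φ'(t)) dt over absolutely continuous φ on [a,b] with φ(a) = c, φ(b) = d and ‖w − φ‖_{∞,[a,b]} ≤ h/2. If u ∈ L¹([a,b]) denotes the a.e. derivative of U, then u is of locally bounded variation on (a,b): for every subinterval (s,t) with a < s < t < b, the total variation of u on (s,t) is finite. -/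
open MeasureTheory Set Filter

noncomputable section

open scoped Topology ENNReal

namespace TautAux

/-- Interval integrability within `[a,b]`. -/
lemma intervalIntegrable_of_integrableOn {a b : ℝ} {f : ℝ → ℝ}
    (hf : IntegrableOn f (Set.Icc a b)) {x y : ℝ} (hx : x ∈ Set.Icc a b)
    (hy : y ∈ Set.Icc a b) : IntervalIntegrable f volume x y := by
  rw [intervalIntegrable_iff]
  exact hf.mono_set fun t ht =>
    ⟨le_trans (le_min hx.1 hy.1) ht.1.le, le_trans ht.2 (max_le hx.2 hy.2)⟩

/-- Congruence for interval integrals from equality on `Ioc`. -/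
lemma integral_congr_Ioc {f g : ℝ → ℝ} {p q : ℝ} (hpq : p ≤ q)
    (hfg : ∀ t ∈ Set.Ioc p q, f t = g t) :
    ∫ t in p..q, f t = ∫ t in p..q, g t := by
  rw [intervalIntegral.integral_of_le hpq, intervalIntegral.integral_of_le hpq]
  exact setIntegral_congr_fun measurableSet_Ioc hfg

/-- Difference formula for the primitive. -/
lemma sub_eq_integral {a b : ℝ} {U u : ℝ → ℝ}
    (hu : IntegrableOn u (Set.Icc a b))
    (hform : ∀ x ∈ Set.Icc a b, U x = U a + ∫ t in a..x, u t)
    {x y : ℝ} (hx : x ∈ Set.Icc a b) (hy : y ∈ Set.Icc a b) :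
    U y - U x = ∫ t in x..y, u t := by
  have h1 := hform x hx
  have h2 := hform y hy
  have hadd := intervalIntegral.integral_add_adjacent_intervals
    (intervalIntegrable_of_integrableOn hu (left_mem_Icc.2 (hx.1.trans hx.2)) hx)
    (intervalIntegrable_of_integrableOn hu hx hy)
  rw [h1, h2, ← hadd]
  ring

/-- The chord comparison lemma: if the chord of `U` over `[α,β]` stays in the tube,
then `U` coincides with the chord on `[α,β]`. -/
lemma chord_eq {a b h c d : ℝ} {w C U u : ℝ → ℝ}
    (hab : a < b)
    (hC : ConvexOn ℝ Set.univ C)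
    (hU : IsUniqueMinBC a b h c d w C U u)
    (good : IntegrableOn (fun t => C (u t)) (Set.Icc a b))
    {α β : ℝ} (hαa : a ≤ α) (hβb : β ≤ b) (hαβ : α < β)
    (htube : ∀ x ∈ Set.Icc α β,
      |w x - (U α + (U β - U α) / (β - α) * (x - α))| ≤ h / 2) :
    ∀ x ∈ Set.Icc α β, U x = U α + (U β - U α) / (β - α) * (x - α) := by
  classical
  obtain ⟨⟨⟨⟨hu_int, hform⟩, htubeU⟩, hba, hbb⟩, hmin, huniq⟩ := hU
  have hab' : a ≤ b := hab.le
  have hαb : α ∈ Set.Icc a b := ⟨hαa, hαβ.le.trans hβb⟩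
  have hβab : β ∈ Set.Icc a b := ⟨hαa.trans hαβ.le, hβb⟩
  have haab : a ∈ Set.Icc a b := left_mem_Icc.2 hab'
  have hbab : b ∈ Set.Icc a b := right_mem_Icc.2 hab'
  have hpos : (0:ℝ) < β - α := by linarith
  set m : ℝ := (U β - U α) / (β - α) with hm
  set L : ℝ → ℝ := fun ξ => U α + m * (ξ - α) with hL
  have hmβα : m * (β - α) = U β - U α := by
    rw [hm]; field_simp
  set k : ℝ → ℝ := fun t => if t ∈ Set.Ioc α β then m else u t with hk
  set ψ : ℝ → ℝ := fun ξ => if ξ ∈ Set.Icc α β then L ξ else U ξ with hψ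
  have hk_eq_out : ∀ t, t ∉ Set.Ioc α β → k t = u t := fun t ht => if_neg ht
  have hk_int : IntegrableOn k (Set.Icc a b) := by
    have h1 : IntegrableOn k (Set.Icc a b \ Set.Ioc α β) :=
      (hu_int.mono_set diff_subset).congr_fun (fun t ht => (hk_eq_out t ht.2).symm)
        (measurableSet_Icc.diff measurableSet_Ioc)
    have h2 : IntegrableOn k (Set.Ioc α β) :=
      (integrableOn_const (C := m) measure_Ioc_lt_top.ne).congr_fun
        (fun t ht => by simp only [hk, if_pos ht]) measurableSet_Ioc
    exact (h1.union h2).mono_set (Set.subset_diff_union _ _)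
  have hkII : ∀ {x y : ℝ}, x ∈ Set.Icc a b → y ∈ Set.Icc a b →
      IntervalIntegrable k volume x y :=
    fun hx hy => intervalIntegrable_of_integrableOn hk_int hx hy
  have hψa : ψ a = U a := by
    by_cases ha' : a ∈ Set.Icc α β
    · have hαa' : α = a := le_antisymm ha'.1 hαa
      subst hαa'
      simp only [hψ, hL, sub_self, mul_zero, add_zero, ite_self]
    · simp only [hψ, if_neg ha']
  have hψb : ψ b = U b := by
    by_cases hb' : b ∈ Set.Icc α β
    · have hβb' : β = b := le_antisymm hβb hb'.2
      subst hβb'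
      simp only [hψ, hL, ite_self]
      simp only [if_pos hb', hL]
      linarith [hmβα]
    · simp only [hψ, if_neg hb']
  have hInt_aα : ∫ t in a..α, k t = U α - U a := by
    rw [integral_congr_Ioc hαa
      (fun t ht => hk_eq_out t (fun hmem => absurd hmem.1 (not_lt.2 ht.2)))]
    exact (sub_eq_integral hu_int hform haab hαb).symm
  have hInt_αξ : ∀ ξ, α ≤ ξ → ξ ≤ β → ∫ t in α..ξ, k t = m * (ξ - α) := by
    intro ξ h1 h2
    rw [integral_congr_Ioc h1 (fun t ht => if_pos ⟨ht.1, ht.2.trans h2⟩)]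
    rw [intervalIntegral.integral_const, smul_eq_mul]; ring
  have hInt_βξ : ∀ ξ, β ≤ ξ → ξ ≤ b → ∫ t in β..ξ, k t = U ξ - U β := by
    intro ξ h1 h2
    rw [integral_congr_Ioc h1
      (fun t ht => hk_eq_out t (fun hmem => absurd hmem.2 (not_le.2 ht.1)))]
    exact (sub_eq_integral hu_int hform hβab ⟨hαa.trans (hαβ.le.trans h1), h2⟩).symm
  have hψform : ∀ ξ ∈ Set.Icc a b, ψ ξ = ψ a + ∫ t in a..ξ, k t := by
    intro ξ hξ
    rw [hψa]
    rcases lt_or_ge ξ α with h1 | h1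
    · have hcongr : ∫ t in a..ξ, k t = ∫ t in a..ξ, u t :=
        integral_congr_Ioc hξ.1
          (fun t ht => hk_eq_out t (fun hmem => absurd hmem.1 (not_lt.2 (ht.2.trans h1.le))))
      have hξmem : ξ ∉ Set.Icc α β := fun hmem => absurd hmem.1 (not_le.2 h1)
      simp only [hψ, if_neg hξmem]
      rw [hcongr]; exact hform ξ hξ
    · rcases le_or_gt ξ β with h2 | h2
      · have hsplit : ∫ t in a..ξ, k t = (∫ t in a..α, k t) + ∫ t in α..ξ, k t :=
          (intervalIntegral.integral_add_adjacent_intervals (hkII haab hαb) (hkII hαb hξ)).symm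
        have hmem : ξ ∈ Set.Icc α β := ⟨h1, h2⟩
        simp only [hψ, if_pos hmem, hL]
        rw [hsplit, hInt_aα, hInt_αξ ξ h1 h2]; ring
      · have hsplit : ∫ t in a..ξ, k t = (∫ t in a..β, k t) + ∫ t in β..ξ, k t :=
          (intervalIntegral.integral_add_adjacent_intervals (hkII haab hβab) (hkII hβab hξ)).symm
        have hInt_aβ : ∫ t in a..β, k t = U β - U a := by
          have hsp2 : ∫ t in a..β, k t = (∫ t in a..α, k t) + ∫ t in α..β, k t :=
            (intervalIntegral.integral_add_adjacent_intervals (hkII haab hαb) (hkII hαb hβab)).symm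
          rw [hsp2, hInt_aα, hInt_αξ β hαβ.le le_rfl, hmβα]; ring
        have hξmem : ξ ∉ Set.Icc α β := fun hmem => absurd hmem.2 (not_le.2 h2)
        simp only [hψ, if_neg hξmem]
        rw [hsplit, hInt_aβ, hInt_βξ ξ h2.le hξ.2]; ring
  have hψtube : InTube a b h w ψ := by
    intro ξ hξ
    by_cases hmem : ξ ∈ Set.Icc α β
    · simp only [hψ, if_pos hmem, hL]
      exact htube ξ hmem
    · simp only [hψ, if_neg hmem]
      exact htubeU ξ hξ
  have hCk : IntegrableOn (fun t => C (k t)) (Set.Icc a b) := by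
    have h1 : IntegrableOn (fun t => C (k t)) (Set.Icc a b \ Set.Ioc α β) :=
      (good.mono_set diff_subset).congr_fun (fun t ht => by rw [hk_eq_out t ht.2])
        (measurableSet_Icc.diff measurableSet_Ioc)
    have h2 : IntegrableOn (fun t => C (k t)) (Set.Ioc α β) :=
      (integrableOn_const (C := C m) measure_Ioc_lt_top.ne).congr_fun
        (fun t ht => by simp only [hk, if_pos ht]) measurableSet_Ioc
    exact (h1.union h2).mono_set (Set.subset_diff_union _ _)
  have hμ : (volume.restrict (Set.Ioc α β)) Set.univ = ENNReal.ofReal (β - α) := by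
    rw [Measure.restrict_apply_univ, Real.volume_Ioc]
  haveI : IsFiniteMeasure (volume.restrict (Set.Ioc α β)) :=
    ⟨by rw [hμ]; exact ENNReal.ofReal_lt_top⟩
  haveI : NeZero (volume.restrict (Set.Ioc α β)) := by
    refine ⟨fun h0 => ?_⟩
    have h1 := hμ
    rw [h0] at h1
    simp only [Measure.coe_zero, Pi.zero_apply] at h1
    rw [eq_comm, ENNReal.ofReal_eq_zero] at h1
    linarith
  have hIocsub : Set.Ioc α β ⊆ Set.Icc a b :=
    fun t ht => ⟨hαa.trans ht.1.le, ht.2.trans hβb⟩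
  have havg : ⨍ x, u x ∂(volume.restrict (Set.Ioc α β)) = m := by
    rw [average_eq, measureReal_def, hμ, ENNReal.toReal_ofReal hpos.le]
    have hiu : ∫ x, u x ∂(volume.restrict (Set.Ioc α β)) = U β - U α := by
      rw [sub_eq_integral hu_int hform hαb hβab, intervalIntegral.integral_of_le hαβ.le]
    rw [hiu, smul_eq_mul, hm]
    field_simp
  have hJensen : C m * (β - α) ≤ ∫ t in α..β, C (u t) := by
    have hint_u : Integrable u (volume.restrict (Set.Ioc α β)) := hu_int.mono_set hIocsub
    have hint_Cu : Integrable (C ∘ u) (volume.restrict (Set.Ioc α β)) :=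
      good.mono_set hIocsub
    have hJ := hC.map_average_le (ConvexOn.continuousOn isOpen_univ hC) isClosed_univ
      (Filter.Eventually.of_forall fun x => Set.mem_univ _) hint_u hint_Cu
    rw [havg, average_eq, measureReal_def, hμ, ENNReal.toReal_ofReal hpos.le, smul_eq_mul] at hJ
    have hJ' : C m ≤ (β - α)⁻¹ * ∫ t in Set.Ioc α β, C (u t) := by
      simpa [Function.comp] using hJ
    rw [intervalIntegral.integral_of_le hαβ.le]
    calc C m * (β - α) ≤ ((β - α)⁻¹ * ∫ t in Set.Ioc α β, C (u t)) * (β - α) :=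
          mul_le_mul_of_nonneg_right hJ' hpos.le
      _ = ∫ t in Set.Ioc α β, C (u t) := by field_simp
  have i1 : IntervalIntegrable (fun t => C (u t)) volume a α :=
    intervalIntegrable_of_integrableOn good haab hαb
  have i2 : IntervalIntegrable (fun t => C (u t)) volume α β :=
    intervalIntegrable_of_integrableOn good hαb hβab
  have i3 : IntervalIntegrable (fun t => C (u t)) volume β b :=
    intervalIntegrable_of_integrableOn good hβab hbab
  have j1 : IntervalIntegrable (fun t => C (k t)) volume a α :=
    intervalIntegrable_of_integrableOn hCk haab hαb
  have j2 : IntervalIntegrable (fun t => C (k t)) volume α β :=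
    intervalIntegrable_of_integrableOn hCk hαb hβab
  have j3 : IntervalIntegrable (fun t => C (k t)) volume β b :=
    intervalIntegrable_of_integrableOn hCk hβab hbab
  have hsplitU : energy a b C u
      = (∫ t in a..α, C (u t)) + (∫ t in α..β, C (u t)) + ∫ t in β..b, C (u t) := by
    rw [energy, ← intervalIntegral.integral_add_adjacent_intervals (i1.trans i2) i3,
      ← intervalIntegral.integral_add_adjacent_intervals i1 i2]
  have hsplitK : energy a b C k
      = (∫ t in a..α, C (k t)) + (∫ t in α..β, C (k t)) + ∫ t in β..b, C (k t) := by
    rw [energy, ← intervalIntegral.integral_add_adjacent_intervals (j1.trans j2) j3,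
      ← intervalIntegral.integral_add_adjacent_intervals j1 j2]
  have hk_out1 : ∫ t in a..α, C (k t) = ∫ t in a..α, C (u t) :=
    integral_congr_Ioc hαa
      (fun t ht => by rw [hk_eq_out t (fun hmem => absurd hmem.1 (not_lt.2 ht.2))])
  have hk_out3 : ∫ t in β..b, C (k t) = ∫ t in β..b, C (u t) :=
    integral_congr_Ioc hβb
      (fun t ht => by rw [hk_eq_out t (fun hmem => absurd hmem.2 (not_le.2 ht.1))])
  have hk_mid : ∫ t in α..β, C (k t) = C m * (β - α) := by
    rw [integral_congr_Ioc hαβ.le (g := fun _ => C m)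
      (fun t ht => by simp only [hk, if_pos ht])]
    rw [intervalIntegral.integral_const, smul_eq_mul]; ring
  have hEle : energy a b C k ≤ energy a b C u := by
    rw [hsplitU, hsplitK, hk_out1, hk_out3, hk_mid]
    linarith [hJensen]
  have hAdm : AdmissibleBC a b h c d w ψ k :=
    ⟨⟨⟨hk_int, hψform⟩, hψtube⟩, by rw [hψa]; exact hba, by rw [hψb]; exact hbb⟩
  have hEq := huniq ψ k hAdm hEle
  intro x hx
  have hxab : x ∈ Set.Icc a b := ⟨hαa.trans hx.1, hx.2.trans hβb⟩
  have hx2 := hEq hxab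
  simp only [hψ, if_pos hx, hL] at hx2
  exact hx2.symm


lemma AdmissibleBC.neg {a b h c d : ℝ} {w φ g : ℝ → ℝ}
    (hA : AdmissibleBC a b h c d w φ g) :
    AdmissibleBC a b h (-c) (-d) (fun x => -(w x)) (fun x => -(φ x)) (fun x => -(g x)) := by
  obtain ⟨⟨⟨hint, hform⟩, htube⟩, h1, h2⟩ := hA
  refine ⟨⟨⟨hint.neg, fun x hx => ?_⟩, fun x hx => ?_⟩, by simp [h1], by simp [h2]⟩
  · simp only [intervalIntegral.integral_neg]
    rw [hform x hx]; ring
  · have := htube x hx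
    calc |(fun x => -(w x)) x - (fun x => -(φ x)) x| = |-(w x - φ x)| := by
          simp only []; ring_nf
      _ = |w x - φ x| := abs_neg _
      _ ≤ h / 2 := this

/-- Negation transport for minimizers. -/
lemma IsUniqueMinBC.neg {a b h c d : ℝ} {w C U u : ℝ → ℝ}
    (hU : IsUniqueMinBC a b h c d w C U u) :
    IsUniqueMinBC a b h (-c) (-d) (fun x => -(w x)) (fun y => C (-y))
      (fun x => -(U x)) (fun x => -(u x)) := by
  have eneg : ∀ k : ℝ → ℝ, energy a b (fun y => C (-y)) k = energy a b C (fun x => -(k x)) :=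
    fun k => rfl
  have eneg2 : energy a b (fun y => C (-y)) (fun x => -(u x)) = energy a b C u := by
    simp only [energy, neg_neg]
  refine ⟨AdmissibleBC.neg hU.1, ?_, ?_⟩
  · intro ψ k hA
    have hA' : AdmissibleBC a b h c d w (fun x => -(ψ x)) (fun x => -(k x)) := by
      have := AdmissibleBC.neg hA
      simpa [neg_neg] using this
    have := hU.2.1 _ _ hA'
    rw [eneg2, eneg k]
    exact this
  · intro ψ k hA hE
    have hA' : AdmissibleBC a b h c d w (fun x => -(ψ x)) (fun x => -(k x)) := by
      have := AdmissibleBC.neg hA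
      simpa [neg_neg] using this
    rw [eneg k, eneg2] at hE
    have := hU.2.2 _ _ hA' hE
    intro x hx
    have h2 := this hx
    simp only at h2 ⊢
    linarith [h2]

/-- On a short interval staying `ρ` above the lower tube boundary, `U` satisfies the
convexity (chord) inequality. -/
lemma piece_convex {a b h c d : ℝ} {w C U u : ℝ → ℝ}
    (hab : a < b)
    (hC : ConvexOn ℝ Set.univ C)
    (hU : IsUniqueMinBC a b h c d w C U u)
    (good : IntegrableOn (fun t => C (u t)) (Set.Icc a b))
    (hUc : ContinuousOn U (Set.Icc a b))
    {p q ρ : ℝ} (hρ : 0 < ρ) (hap : a ≤ p) (hqb : q ≤ b)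
    (hmargin : ∀ x ∈ Set.Icc p q, w x - h / 2 + ρ ≤ U x)
    (hosc : ∀ x ∈ Set.Icc p q, ∀ y ∈ Set.Icc p q, |w x - w y| ≤ ρ) :
    ∀ x z, x ∈ Set.Icc p q → z ∈ Set.Icc p q → ∀ y ∈ Set.Ioo x z,
      U y * (z - x) ≤ U x * (z - y) + U z * (y - x) := by
  intro x z hx hz y hy
  by_contra hcon
  push_neg at hcon
  have hxy : x < y := hy.1
  have hyz : y < z := hy.2
  have hxz : x < z := hxy.trans hyz
  have hzx : (0:ℝ) < z - x := by linarith
  have hIxz : Set.Icc x z ⊆ Set.Icc p q :=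
    fun t ht => ⟨le_trans hx.1 ht.1, le_trans ht.2 hz.2⟩
  have hIab : Set.Icc p q ⊆ Set.Icc a b := fun t ht => ⟨hap.trans ht.1, ht.2.trans hqb⟩
  have htubeU := hU.1.1.2
  have hUle : ∀ ξ ∈ Set.Icc a b, U ξ ≤ w ξ + h / 2 := by
    intro ξ hξ
    have habs := abs_le.1 (htubeU ξ hξ)
    linarith [habs.1]
  set mL : ℝ := (U z - U x) / (z - x) with hmL
  set L : ℝ → ℝ := fun ξ => U x + mL * (ξ - x) with hLdef
  have hLx : L x = U x := by simp [hLdef]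
  have hUyL : L y < U y := by
    have key : U x + (U z - U x) / (z - x) * (y - x)
        = (U x * (z - y) + U z * (y - x)) / (z - x) := by field_simp; ring
    simp only [hLdef, hmL]
    rw [key, div_lt_iff₀ hzx]
    linarith [hcon]
  have hLcont : Continuous L := by
    simp only [hLdef]
    exact continuous_const.add (continuous_const.mul (continuous_id.sub continuous_const))
  have hUcxy : ContinuousOn (fun ξ => U ξ - L ξ) (Set.Icc x z) :=
    (hUc.mono (fun t ht => hIab (hIxz ht))).sub hLcont.continuousOn
  -- the contact point on the left
  have hS1closed : IsClosed {ξ : ℝ | ξ ∈ Set.Icc x y ∧ U ξ - L ξ ≤ 0} := by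
    have h1 : ContinuousOn (fun ξ => U ξ - L ξ) (Set.Icc x y) :=
      hUcxy.mono (Set.Icc_subset_Icc le_rfl hyz.le)
    have h2 := h1.preimage_isClosed_of_isClosed isClosed_Icc (isClosed_Iic (a := (0:ℝ)))
    have hset : {ξ : ℝ | ξ ∈ Set.Icc x y ∧ U ξ - L ξ ≤ 0}
        = Set.Icc x y ∩ (fun ξ => U ξ - L ξ) ⁻¹' Set.Iic 0 := by
      ext ξ
      simp [Set.mem_setOf_eq, Set.mem_inter_iff, Set.mem_preimage, Set.mem_Iic]
    rw [hset]; exact h2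
  have hS1ne : {ξ : ℝ | ξ ∈ Set.Icc x y ∧ U ξ - L ξ ≤ 0}.Nonempty :=
    ⟨x, ⟨Set.left_mem_Icc.2 hxy.le, by rw [hLx]; simp⟩⟩
  have hS1bdd : BddAbove {ξ : ℝ | ξ ∈ Set.Icc x y ∧ U ξ - L ξ ≤ 0} :=
    ⟨y, fun ξ hξ => hξ.1.2⟩
  obtain ⟨α, hαS1, hαmax⟩ : ∃ α, α ∈ {ξ : ℝ | ξ ∈ Set.Icc x y ∧ U ξ - L ξ ≤ 0} ∧
      ∀ ξ ∈ {ξ : ℝ | ξ ∈ Set.Icc x y ∧ U ξ - L ξ ≤ 0}, ξ ≤ α :=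
    ⟨_, hS1closed.csSup_mem hS1ne hS1bdd, fun ξ hξ => le_csSup hS1bdd hξ⟩
  have hxα : x ≤ α := hαS1.1.1
  have hαy : α < y := by
    rcases lt_or_eq_of_le hαS1.1.2 with hlt | heq
    · exact hlt
    · exfalso
      have := hαS1.2
      rw [heq] at this
      linarith [hUyL]
  -- the contact point on the right
  have hS2closed : IsClosed {ξ : ℝ | ξ ∈ Set.Icc y z ∧ U ξ - L ξ ≤ 0} := by
    have h1 : ContinuousOn (fun ξ => U ξ - L ξ) (Set.Icc y z) :=
      hUcxy.mono (Set.Icc_subset_Icc hxy.le le_rfl)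
    have h2 := h1.preimage_isClosed_of_isClosed isClosed_Icc (isClosed_Iic (a := (0:ℝ)))
    have hset : {ξ : ℝ | ξ ∈ Set.Icc y z ∧ U ξ - L ξ ≤ 0}
        = Set.Icc y z ∩ (fun ξ => U ξ - L ξ) ⁻¹' Set.Iic 0 := by
      ext ξ
      simp [Set.mem_setOf_eq, Set.mem_inter_iff, Set.mem_preimage, Set.mem_Iic]
    rw [hset]; exact h2
  have hLz : L z = U z := by
    simp only [hLdef, hmL]
    field_simp
    ring
  have hS2ne : {ξ : ℝ | ξ ∈ Set.Icc y z ∧ U ξ - L ξ ≤ 0}.Nonempty :=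
    ⟨z, ⟨Set.right_mem_Icc.2 hyz.le, by rw [hLz]; simp⟩⟩
  have hS2bdd : BddBelow {ξ : ℝ | ξ ∈ Set.Icc y z ∧ U ξ - L ξ ≤ 0} :=
    ⟨y, fun ξ hξ => hξ.1.1⟩
  obtain ⟨β, hβS2, hβmin⟩ : ∃ β, β ∈ {ξ : ℝ | ξ ∈ Set.Icc y z ∧ U ξ - L ξ ≤ 0} ∧
      ∀ ξ ∈ {ξ : ℝ | ξ ∈ Set.Icc y z ∧ U ξ - L ξ ≤ 0}, β ≤ ξ :=
    ⟨_, hS2closed.csInf_mem hS2ne hS2bdd, fun ξ hξ => csInf_le hS2bdd hξ⟩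
  have hβz : β ≤ z := hβS2.1.2
  have hyβ : y < β := by
    rcases lt_or_eq_of_le hβS2.1.1 with hlt | heq
    · exact hlt
    · exfalso
      have := hβS2.2
      rw [← heq] at this
      linarith [hUyL]
  have hαβ2 : α < β := hαy.trans hyβ
  have hβα : (0:ℝ) < β - α := by linarith
  -- interior strict inequality
  have hmid : ∀ ξ, α < ξ → ξ < β → L ξ < U ξ := by
    intro ξ h1 h2
    by_contra hle
    push_neg at hle
    rcases le_or_gt ξ y with hc1 | hc1
    · have hmem : ξ ∈ {ξ : ℝ | ξ ∈ Set.Icc x y ∧ U ξ - L ξ ≤ 0} :=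
        ⟨⟨hxα.trans h1.le, hc1⟩, by linarith⟩
      exact absurd (hαmax ξ hmem) (not_le.2 h1)
    · have hmem : ξ ∈ {ξ : ℝ | ξ ∈ Set.Icc y z ∧ U ξ - L ξ ≤ 0} :=
        ⟨⟨hc1.le, h2.le.trans hβz⟩, by linarith⟩
      exact absurd (hβmin ξ hmem) (not_le.2 h2)
  -- memberships
  have hαpq : α ∈ Set.Icc p q :=
    ⟨hx.1.trans hxα, (hαS1.1.2.trans (hyz.le.trans hz.2))⟩
  have hβpq : β ∈ Set.Icc p q := ⟨hx.1.trans (hxy.le.trans hβS2.1.1), hβz.trans hz.2⟩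
  have haα : a ≤ α := hap.trans hαpq.1
  have hβb2 : β ≤ b := hβpq.2.trans hqb
  -- the secondary chord lies below L on [α, β]
  have hL2L : ∀ ξ ∈ Set.Icc α β, U α + (U β - U α) / (β - α) * (ξ - α) ≤ L ξ := by
    intro ξ hξ
    have e1 : U α - L α ≤ 0 := hαS1.2
    have e2 : U β - L β ≤ 0 := hβS2.2
    have keyid : (U α + (U β - U α) / (β - α) * (ξ - α)) - L ξ
        = ((U α - L α) * (β - ξ) + (U β - L β) * (ξ - α)) / (β - α) := by
      simp only [hLdef, hmL]
      field_simp
      ring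
    have t1 : (U α - L α) * (β - ξ) ≤ 0 :=
      mul_nonpos_of_nonpos_of_nonneg e1 (by linarith [hξ.2])
    have t2 : (U β - L β) * (ξ - α) ≤ 0 :=
      mul_nonpos_of_nonpos_of_nonneg e2 (by linarith [hξ.1])
    have hnum : (U α - L α) * (β - ξ) + (U β - L β) * (ξ - α) ≤ 0 := by linarith
    have h5 : (U α + (U β - U α) / (β - α) * (ξ - α)) - L ξ ≤ 0 := by
      rw [keyid]
      exact div_nonpos_iff.mpr (Or.inr ⟨hnum, hβα.le⟩)
    linarith
  -- tube condition for the secondary chord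
  have htube2 : ∀ ξ ∈ Set.Icc α β,
      |w ξ - (U α + (U β - U α) / (β - α) * (ξ - α))| ≤ h / 2 := by
    intro ξ hξ
    have hξpq : ξ ∈ Set.Icc p q := ⟨hαpq.1.trans hξ.1, hξ.2.trans hβpq.2⟩
    have hLcle : U α + (U β - U α) / (β - α) * (ξ - α) ≤ w ξ + h / 2 := by
      rcases eq_or_lt_of_le hξ.1 with he | h1
      · rw [← he]
        have := hUle α (hIab hαpq)
        simp only [sub_self, mul_zero, add_zero]
        exact this
      · rcases eq_or_lt_of_le hξ.2 with he2 | h2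
        · rw [he2]
          have hUβ : U α + (U β - U α) / (β - α) * (β - α) = U β := by field_simp; ring
          rw [hUβ]
          exact hUle β (hIab hβpq)
        · have hLt := hmid ξ h1 h2
          have hle2 := hL2L ξ hξ
          exact hle2.trans (hLt.le.trans (hUle ξ (hIab hξpq)))
    have hLcge : w ξ - h / 2 ≤ U α + (U β - U α) / (β - α) * (ξ - α) := by
      have hmα := hmargin α hαpq
      have hmβ := hmargin β hβpq
      have ho1 := abs_le.1 (hosc ξ hξpq α hαpq)
      have ho2 := abs_le.1 (hosc ξ hξpq β hβpq)
      have keymin : U α + (U β - U α) / (β - α) * (ξ - α)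
          = ((β - ξ) * U α + (ξ - α) * U β) / (β - α) := by field_simp; ring
      rcases le_total (U α) (U β) with hm | hm
      · have hmin : U α ≤ ((β - ξ) * U α + (ξ - α) * U β) / (β - α) := by
          rw [le_div_iff₀ hβα]
          nlinarith [mul_nonneg (sub_nonneg.2 hξ.1) (sub_nonneg.2 hm)]
        rw [keymin]
        linarith [ho1.1, ho1.2]
      · have hmin : U β ≤ ((β - ξ) * U α + (ξ - α) * U β) / (β - α) := by
          rw [le_div_iff₀ hβα]
          nlinarith [mul_nonneg (sub_nonneg.2 (show ξ ≤ β from hξ.2)) (sub_nonneg.2 hm)]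
        rw [keymin]
        linarith [ho2.1, ho2.2]
    exact abs_le.2 ⟨by linarith, by linarith⟩
  have hfin := (chord_eq hab hC hU good haα hβb2 hαβ2 htube2) y ⟨hαy.le, hyβ.le⟩
  have hyL : U y ≤ L y := by
    rw [hfin]
    exact hL2L y ⟨hαy.le, hyβ.le⟩
  linarith [hUyL]

/-- From the chord inequality, the one-sided slope limit function is monotone. -/
lemma slope_core {U : ℝ → ℝ} {p q r : ℝ} (hr : 0 < r) (hpq : p ≤ q) (hqpr : q - p ≤ r)
    (conv : ∀ x y z : ℝ, p - r ≤ x → x < y → y < z → z ≤ q + r →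
      U y * (z - x) ≤ U x * (z - y) + U z * (y - x)) :
    ∃ R : ℝ → ℝ, MonotoneOn R (Set.Icc p q) ∧
      ∀ x ∈ Set.Icc p q,
        Filter.Tendsto (fun y => (U y - U x) / (y - x)) (𝓝[>] x) (𝓝 (R x)) := by
  classical
  set f : ℝ → ℝ → ℝ := fun x y => (U y - U x) / (y - x) with hf
  have s1 : ∀ {x y z : ℝ}, p - r ≤ x → x < y → y < z → z ≤ q + r → f x y ≤ f x z := by
    intro x y z hx hxy hyz hz
    have h1 : (0:ℝ) < y - x := by linarith
    have h2 : (0:ℝ) < z - x := by linarith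
    rw [hf]
    simp only []
    rw [div_le_div_iff₀ h1 h2]
    nlinarith [conv x y z hx hxy hyz hz]
  have s2 : ∀ {x y z : ℝ}, p - r ≤ x → x < y → y < z → z ≤ q + r → f x z ≤ f y z := by
    intro x y z hx hxy hyz hz
    have h1 : (0:ℝ) < z - x := by linarith
    have h2 : (0:ℝ) < z - y := by linarith
    rw [hf]
    simp only []
    rw [div_le_div_iff₀ h1 h2]
    nlinarith [conv x y z hx hxy hyz hz]
  have s12 : ∀ {x y z : ℝ}, p - r ≤ x → x < y → y < z → z ≤ q + r → f x y ≤ f y z :=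
    fun hx hxy hyz hz => le_trans (s1 hx hxy hyz hz) (s2 hx hxy hyz hz)
  have hBdd : ∀ x ∈ Set.Icc p q, BddBelow (f x '' Set.Ioc x (x + r)) := by
    intro x hx
    refine ⟨f (p - r) x, ?_⟩
    rintro _ ⟨y, hy, rfl⟩
    exact s12 le_rfl (by linarith [hx.1]) hy.1 (by linarith [hx.2, hy.2])
  refine ⟨fun x => sInf (f x '' Set.Ioc x (x + r)), ?_, ?_⟩
  · intro x1 hx1 x2 hx2 h12
    rcases eq_or_lt_of_le h12 with rfl | h12
    · exact le_rfl
    have m1 : sInf (f x1 '' Set.Ioc x1 (x1 + r)) ≤ f x1 x2 :=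
      csInf_le (hBdd x1 hx1) ⟨x2, ⟨h12, by linarith [hx2.2, hx1.1]⟩, rfl⟩
    have m2 : f x1 x2 ≤ sInf (f x2 '' Set.Ioc x2 (x2 + r)) := by
      apply le_csInf
      · exact ⟨_, ⟨x2 + r, ⟨by linarith, le_rfl⟩, rfl⟩⟩
      · rintro _ ⟨y, hy, rfl⟩
        exact s12 (by linarith [hx1.1]) h12 hy.1 (by linarith [hx2.2, hy.2])
    exact m1.trans m2
  · intro x hx
    have hne : (f x '' Set.Ioc x (x + r)).Nonempty :=
      ⟨_, ⟨x + r, ⟨by linarith, le_rfl⟩, rfl⟩⟩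
    rw [tendsto_order]
    constructor
    · intro l hl
      filter_upwards [Ioo_mem_nhdsGT (show x < x + r by linarith)] with y hy
      have hle : sInf (f x '' Set.Ioc x (x + r)) ≤ f x y :=
        csInf_le (hBdd x hx) ⟨y, ⟨hy.1, hy.2.le⟩, rfl⟩
      linarith
    · intro l hl
      obtain ⟨_, ⟨y₀, hy₀, rfl⟩, hy₀l⟩ := exists_lt_of_csInf_lt hne hl
      filter_upwards [Ioo_mem_nhdsGT hy₀.1] with y hy
      have hle : f x y ≤ f x y₀ := s1 (by linarith [hx.1]) hy.1 hy.2 (by linarith [hx.2, hy₀.2])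
      linarith

lemma eVariationOn_neg {f : ℝ → ℝ} {s : Set ℝ} :
    eVariationOn (fun x => -(f x)) s = eVariationOn f s := by
  simp only [eVariationOn, edist_neg_neg]

/-- In the degenerate case where `C ∘ u` fails to be integrable, the hypotheses are
contradictory. -/
lemma bad_case_false {a b h c d : ℝ} {w C U u : ℝ → ℝ}
    (hh : 0 < h) (hab : a < b) (hw : Continuous w)
    (hUc : ContinuousOn U (Set.Icc a b))
    (hU : IsUniqueMinBC a b h c d w C U u)
    (bad : ¬ IntegrableOn (fun t => C (u t)) (Set.Icc a b)) : False := by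
  classical
  obtain ⟨⟨⟨⟨hu_int, hform⟩, htubeU⟩, hba, hbb⟩, hmin, huniq⟩ := hU
  have ham : a < (a + b) / 2 := by linarith
  have hmb : (a + b) / 2 < b := by linarith
  obtain ⟨p, q, hap, hpq, hqb, hO⟩ :
      ∃ p q, a < p ∧ p < q ∧ q < b ∧
        ¬ IntegrableOn (fun t => C (u t)) (Set.Ioc a b \ Set.Ioo p q) := by
    set m0 : ℝ := (a + b) / 2 with hm0
    by_cases hleft : IntegrableOn (fun t => C (u t)) (Set.Icc a m0)
    · have hright : ¬ IntegrableOn (fun t => C (u t)) (Set.Icc m0 b) := by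
        intro hri
        apply bad
        have := hleft.union hri
        rwa [Set.Icc_union_Icc_eq_Icc ham.le hmb.le] at this
      refine ⟨a + (m0 - a) / 3, a + 2 * (m0 - a) / 3, by linarith, by linarith, by linarith, ?_⟩
      intro hint
      apply hright
      rw [integrableOn_Icc_iff_integrableOn_Ioc]
      refine hint.mono_set (fun t ht => ⟨⟨ham.trans ht.1, ht.2⟩, fun hmem => ?_⟩)
      simp only [Set.mem_Ioo] at hmem
      linarith [ht.1, hmem.2, ham]
    · have hleft' : ¬ IntegrableOn (fun t => C (u t)) (Set.Ioc a m0) := by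
        rwa [← integrableOn_Icc_iff_integrableOn_Ioc]
      refine ⟨m0 + (b - m0) / 3, m0 + 2 * (b - m0) / 3, by linarith, by linarith, by linarith, ?_⟩
      intro hint
      apply hleft'
      refine hint.mono_set (fun t ht => ⟨⟨ht.1, ht.2.trans hmb.le⟩, fun hmem => ?_⟩)
      simp only [Set.mem_Ioo] at hmem
      linarith [ht.2, hmem.1, hmb]
  set x₁ : ℝ := (p + q) / 2 with hx1def
  have hax1 : a < x₁ := by rw [hx1def]; linarith
  have hx1b : x₁ < b := by rw [hx1def]; linarith
  have hx1Icc : x₁ ∈ Set.Icc a b := ⟨hax1.le, hx1b.le⟩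
  have hUx1 : ContinuousAt U x₁ := hUc.continuousAt (Icc_mem_nhds hax1 hx1b)
  have hecont : ContinuousAt (fun ξ => w ξ - U ξ) x₁ := hw.continuousAt.sub hUx1
  set e₀ : ℝ := w x₁ - U x₁ with he₀
  obtain ⟨δ, hδpos, hδball⟩ := Metric.continuousAt_iff.1 hecont (h / 4) (by linarith)
  set δ' : ℝ := min (δ / 2) ((q - p) / 4) with hδ'def
  have hδ'pos : 0 < δ' := lt_min (by linarith) (by linarith)
  set α : ℝ := x₁ - δ' with hαdef
  set β : ℝ := x₁ + δ' with hβdef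
  have hδ'qp : δ' ≤ (q - p) / 4 := min_le_right _ _
  have hδ'δ : δ' ≤ δ / 2 := min_le_left _ _
  have hpα : p < α := by rw [hαdef, hx1def]; linarith
  have hβq : β < q := by rw [hβdef, hx1def]; linarith
  have hαβ : α < β := by rw [hαdef, hβdef]; linarith
  have haα : a < α := hap.trans hpα
  have hβb : β < b := hβq.trans hqb
  have hβα : (0:ℝ) < β - α := by linarith
  have hslack : ∀ ξ ∈ Set.Icc α β, |w ξ - U ξ - e₀| ≤ h / 4 := by
    intro ξ hξ
    have hdist : dist ξ x₁ < δ := by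
      rw [Real.dist_eq, abs_lt]
      have h1 := hξ.1
      have h2 := hξ.2
      rw [hαdef] at h1
      rw [hβdef] at h2
      constructor <;> linarith
    have hd2 := hδball hdist
    rw [Real.dist_eq] at hd2
    exact hd2.le
  set c₀ : ℝ := h / (β - α) ^ 2 with hc₀def
  have hc₀pos : 0 < c₀ := div_pos hh (by positivity)
  set η : ℝ → ℝ := fun ξ => if ξ ∈ Set.Icc α β then c₀ * ((ξ - α) * (β - ξ)) else 0
    with hηdef
  set η' : ℝ → ℝ := fun t => if t ∈ Set.Ioc α β then c₀ * (α + β - 2 * t) else 0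
    with hη'def
  have hηnonneg : ∀ ξ, 0 ≤ η ξ := by
    intro ξ
    simp only [hηdef]
    by_cases hmem : ξ ∈ Set.Icc α β
    · rw [if_pos hmem]
      exact mul_nonneg hc₀pos.le
        (mul_nonneg (by linarith [hmem.1]) (by linarith [hmem.2]))
    · rw [if_neg hmem]
  have hηle : ∀ ξ, η ξ ≤ h / 4 := by
    intro ξ
    simp only [hηdef]
    by_cases hmem : ξ ∈ Set.Icc α β
    · rw [if_pos hmem]
      have hgen : ∀ A B x : ℝ, (x - A) * (B - x) ≤ (B - A) ^ 2 / 4 := by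
        intro A B x
        nlinarith [sq_nonneg (A + B - 2 * x)]
      have h1 : (ξ - α) * (β - ξ) ≤ (β - α) ^ 2 / 4 := hgen α β ξ
      have h2 : c₀ * ((ξ - α) * (β - ξ)) ≤ c₀ * ((β - α) ^ 2 / 4) :=
        mul_le_mul_of_nonneg_left h1 hc₀pos.le
      have h3 : c₀ * ((β - α) ^ 2 / 4) = h / 4 := by
        rw [hc₀def]
        field_simp
      linarith
    · rw [if_neg hmem]
      linarith
  have hηx1 : η x₁ = h / 4 := by
    have hmem : x₁ ∈ Set.Icc α β := ⟨by rw [hαdef]; linarith, by rw [hβdef]; linarith⟩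
    have hδδ : (x₁ - α) * (β - x₁) = δ' * δ' := by rw [hαdef, hβdef]; ring
    have hba2 : β - α = 2 * δ' := by rw [hαdef, hβdef]; ring
    simp only [hηdef]; rw [if_pos hmem, hδδ, hc₀def, hba2]
    field_simp
    ring
  have hη'int : Integrable η' volume := by
    have heq : η' = (Set.Ioc α β).indicator (fun t => c₀ * (α + β - 2 * t)) := by
      funext t
      simp only [hη'def]; rw [Set.indicator_apply]
    rw [heq]
    exact ((continuous_const.mul (continuous_const.sub
      (continuous_const.mul continuous_id'))).integrableOn_Ioc).integrable_indicator
      measurableSet_Ioc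
  have hη'II : ∀ x y : ℝ, IntervalIntegrable η' volume x y := fun x y =>
    hη'int.intervalIntegrable
  have hMid : ∀ ξ, α ≤ ξ → ξ ≤ β → ∫ t in α..ξ, η' t = c₀ * ((ξ - α) * (β - ξ)) := by
    intro ξ h1 h2
    have hcongr : ∫ t in α..ξ, η' t
        = ∫ t in α..ξ, (c₀ * (α + β) - 2 * c₀ * t) := by
      apply integral_congr_Ioc h1
      intro t ht
      simp only [hη'def]; rw [if_pos (show t ∈ Set.Ioc α β from ⟨ht.1, ht.2.trans h2⟩)]
      ring
    rw [hcongr, intervalIntegral.integral_sub (f := fun _ => c₀ * (α + β)) (g := fun t => 2 * c₀ * t) (continuous_const.intervalIntegrable _ _)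
      ((continuous_const.mul continuous_id').intervalIntegrable _ _)]
    rw [intervalIntegral.integral_const, intervalIntegral.integral_const_mul, integral_id,
      smul_eq_mul]
    ring
  have hFTC : ∀ ξ ∈ Set.Icc a b, ∫ t in a..ξ, η' t = η ξ := by
    intro ξ hξ
    rcases le_or_gt ξ α with h1 | h1
    · have hz : ∫ t in a..ξ, η' t = ∫ t in a..ξ, (0:ℝ) :=
        integral_congr_Ioc hξ.1 (fun t ht => by
          simp only [hη'def]; rw [if_neg]
          intro hmem
          exact absurd hmem.1 (not_lt.2 (ht.2.trans h1)))
      rw [hz, intervalIntegral.integral_zero]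
      simp only [hηdef]
      by_cases hmem : ξ ∈ Set.Icc α β
      · have hξα : ξ = α := le_antisymm h1 hmem.1
        rw [if_pos hmem, hξα]
        ring
      · rw [if_neg hmem]
    · have hsplit1 : ∫ t in a..ξ, η' t = (∫ t in a..α, η' t) + ∫ t in α..ξ, η' t :=
        (intervalIntegral.integral_add_adjacent_intervals (hη'II _ _) (hη'II _ _)).symm
      have hzero : ∫ t in a..α, η' t = 0 := by
        have hz : ∫ t in a..α, η' t = ∫ t in a..α, (0:ℝ) :=
          integral_congr_Ioc haα.le (fun t ht => by
            simp only [hη'def]; rw [if_neg]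
            intro hmem
            exact absurd hmem.1 (not_lt.2 ht.2))
        rw [hz, intervalIntegral.integral_zero]
      rcases le_or_gt ξ β with h2 | h2
      · rw [hsplit1, hzero, hMid ξ h1.le h2, zero_add]
        simp only [hηdef]
        rw [if_pos (show ξ ∈ Set.Icc α β from ⟨h1.le, h2⟩)]
      · have hsplit2 : ∫ t in α..ξ, η' t = (∫ t in α..β, η' t) + ∫ t in β..ξ, η' t :=
          (intervalIntegral.integral_add_adjacent_intervals (hη'II _ _) (hη'II _ _)).symm
        have hz2 : ∫ t in β..ξ, η' t = 0 := by
          have hz : ∫ t in β..ξ, η' t = ∫ t in β..ξ, (0:ℝ) :=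
            integral_congr_Ioc h2.le (fun t ht => by
              simp only [hη'def]; rw [if_neg]
              intro hmem
              exact absurd hmem.2 (not_le.2 ht.1))
          rw [hz, intervalIntegral.integral_zero]
        have hmidβ : ∫ t in α..β, η' t = 0 := by
          rw [hMid β hαβ.le le_rfl]
          ring
        have hηξ : η ξ = 0 := by
          simp only [hηdef]; rw [if_neg]
          intro hmem
          exact absurd hmem.2 (not_le.2 h2)
        rw [hsplit1, hzero, hsplit2, hmidβ, hz2, hηξ]
        ring
  set ε : ℝ := if 0 ≤ e₀ then 1 else -1 with hεdef
  set ψ : ℝ → ℝ := fun ξ => U ξ + ε * η ξ with hψdef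
  set k : ℝ → ℝ := fun t => u t + ε * η' t with hkdef
  have hk_int : IntegrableOn k (Set.Icc a b) :=
    hu_int.add (hη'int.const_mul ε).integrableOn
  have hηa : η a = 0 := by
    simp only [hηdef]; rw [if_neg]
    intro hmem
    exact absurd hmem.1 (not_le.2 haα)
  have hηb : η b = 0 := by
    simp only [hηdef]; rw [if_neg]
    intro hmem
    exact absurd hmem.2 (not_le.2 hβb)
  have hψform : ∀ ξ ∈ Set.Icc a b, ψ ξ = ψ a + ∫ t in a..ξ, k t := by
    intro ξ hξ
    have hIIu : IntervalIntegrable u volume a ξ :=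
      intervalIntegrable_of_integrableOn hu_int (Set.left_mem_Icc.2 hab.le) hξ
    have hadd : ∫ t in a..ξ, k t
        = (∫ t in a..ξ, u t) + ∫ t in a..ξ, ε * η' t :=
      intervalIntegral.integral_add hIIu ((hη'int.const_mul ε).intervalIntegrable)
    have hη'2 : ∫ t in a..ξ, ε * η' t = ε * η ξ := by
      rw [intervalIntegral.integral_const_mul, hFTC ξ hξ]
    simp only [hψdef]
    rw [hadd, hη'2, hηa]
    have := hform ξ hξ
    linarith
  have htube2 : InTube a b h w ψ := by
    intro ξ hξ
    have htU := abs_le.1 (htubeU ξ hξ)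
    by_cases hmem : ξ ∈ Set.Icc α β
    · have hsl := abs_le.1 (hslack ξ hmem)
      have hη1 := hηnonneg ξ
      have hη2 := hηle ξ
      simp only [hψdef]
      rw [abs_le]
      rcases le_or_gt 0 e₀ with hsgn | hsgn
      · rw [hεdef, if_pos hsgn]
        constructor
        · have hge : w ξ - U ξ ≥ e₀ - h / 4 := by linarith [hsl.1]
          linarith
        · have hle : w ξ - U ξ ≤ h / 2 := htU.2
          linarith
      · rw [hεdef, if_neg (not_le.2 hsgn)]
        constructor
        · have := htU.1
          linarith
        · have hle : w ξ - U ξ ≤ e₀ + h / 4 := by linarith [hsl.2]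
          linarith
    · simp only [hψdef]
      simp only [hηdef]; rw [if_neg hmem, mul_zero, add_zero]
      exact htubeU ξ hξ
  have hAdm : AdmissibleBC a b h c d w ψ k := by
    refine ⟨⟨⟨hk_int, hψform⟩, htube2⟩, ?_, ?_⟩
    · simp only [hψdef]
      rw [hηa, mul_zero, add_zero]
      exact hba
    · simp only [hψdef]
      rw [hηb, mul_zero, add_zero]
      exact hbb
  have hEu : energy a b C u = 0 := by
    apply intervalIntegral.integral_undef
    intro hint
    rw [intervalIntegrable_iff_integrableOn_Ioc_of_le hab.le] at hint
    exact bad ((integrableOn_Icc_iff_integrableOn_Ioc (by finiteness)).2 hint)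
  have hEk : energy a b C k = 0 := by
    apply intervalIntegral.integral_undef
    intro hint
    rw [intervalIntegrable_iff_integrableOn_Ioc_of_le hab.le] at hint
    apply hO
    have h2 : IntegrableOn (fun t => C (k t)) (Set.Ioc a b \ Set.Ioo p q) :=
      hint.mono_set Set.diff_subset
    refine h2.congr_fun (fun t ht => ?_) (measurableSet_Ioc.diff measurableSet_Ioo)
    have hη'0 : η' t = 0 := by
      simp only [hη'def]; rw [if_neg]
      intro hmem
      exact ht.2 ⟨hpα.trans hmem.1, hmem.2.trans_lt hβq⟩
    simp only [hkdef]
    rw [hη'0, mul_zero, add_zero]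
  have hEq := huniq ψ k hAdm (le_of_eq (by rw [hEk, hEu]))
  have hcontra := hEq hx1Icc
  simp only [hψdef] at hcontra
  rw [hηx1] at hcontra
  rcases le_or_gt 0 e₀ with hsgn | hsgn
  · rw [hεdef, if_pos hsgn] at hcontra
    linarith
  · rw [hεdef, if_neg (not_le.2 hsgn)] at hcontra
    linarith

lemma bv_piece {U : ℝ → ℝ} {P Q r : ℝ} (hr : 0 < r) (hPQ : P ≤ Q) (hQPr : Q - P ≤ r)
    (conv : ∀ x y z : ℝ, P - r ≤ x → x < y → y < z → z ≤ Q + r →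
      U y * (z - x) ≤ U x * (z - y) + U z * (y - x)) :
    MonotoneOn (fun x => limUnder (𝓝[>] x) (fun y => (U y - U x) / (y - x)))
      (Set.Icc P Q) := by
  obtain ⟨R, hRmono, hRtend⟩ := slope_core hr hPQ hQPr conv
  intro x hx y hy hxy
  simp only []
  rw [(hRtend x hx).limUnder_eq, (hRtend y hy).limUnder_eq]
  exact hRmono hx hy hxy

lemma bv_piece_anti {U : ℝ → ℝ} {P Q r : ℝ} (hr : 0 < r) (hPQ : P ≤ Q) (hQPr : Q - P ≤ r)
    (conv : ∀ x y z : ℝ, P - r ≤ x → x < y → y < z → z ≤ Q + r →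
      (-(U y)) * (z - x) ≤ (-(U x)) * (z - y) + (-(U z)) * (y - x)) :
    AntitoneOn (fun x => limUnder (𝓝[>] x) (fun y => (U y - U x) / (y - x)))
      (Set.Icc P Q) := by
  obtain ⟨R, hRmono, hRtend⟩ := slope_core (U := fun x => -(U x)) hr hPQ hQPr conv
  have htendU : ∀ x ∈ Set.Icc P Q,
      Filter.Tendsto (fun y => (U y - U x) / (y - x)) (𝓝[>] x) (𝓝 (-(R x))) := by
    intro x hx
    have h3 := (hRtend x hx).neg
    exact h3.congr (fun z => by ring)
  intro x hx y hy hxy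
  simp only []
  rw [(htendU x hx).limUnder_eq, (htendU y hy).limUnder_eq]
  exact neg_le_neg (hRmono hx hy hxy)

lemma bv_of_mono_or_anti {v : ℝ → ℝ} {P Q : ℝ}
    (hmo : MonotoneOn v (Set.Icc P Q) ∨ AntitoneOn v (Set.Icc P Q)) :
    BoundedVariationOn v (Set.Icc P Q) := by
  rcases le_or_gt P Q with hPQ | hPQ
  · rcases hmo with hm | hm
    · have h1 := hm.eVariationOn_le (Set.left_mem_Icc.2 hPQ) (Set.right_mem_Icc.2 hPQ)
      rw [Set.inter_self] at h1
      exact ne_top_of_le_ne_top ENNReal.ofReal_ne_top h1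
    · have hm' : MonotoneOn (fun x => -(v x)) (Set.Icc P Q) :=
        fun x hx y hy hxy => neg_le_neg (hm hx hy hxy)
      have h1 := hm'.eVariationOn_le (Set.left_mem_Icc.2 hPQ) (Set.right_mem_Icc.2 hPQ)
      rw [Set.inter_self] at h1
      have h2 : eVariationOn (fun x => -(v x)) (Set.Icc P Q) = eVariationOn v (Set.Icc P Q) :=
        eVariationOn_neg
      rw [h2] at h1
      exact ne_top_of_le_ne_top ENNReal.ofReal_ne_top h1
  · have hsub : (Set.Icc P Q).Subsingleton := by
      rw [Set.Icc_eq_empty (not_le.2 hPQ)]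
      exact Set.subsingleton_empty
    unfold BoundedVariationOn
    rw [eVariationOn.subsingleton v hsub]
    exact ENNReal.zero_ne_top

lemma convexOn_comp_neg {C : ℝ → ℝ} (hC : ConvexOn ℝ Set.univ C) :
    ConvexOn ℝ Set.univ (fun y => C (-y)) := by
  refine ⟨convex_univ, fun x _ y _ p q hp hq hpq => ?_⟩
  have h1 := hC.2 (Set.mem_univ (-x)) (Set.mem_univ (-y)) hp hq hpq
  have h2 : p • (-x) + q • (-y) = -(p • x + q • y) := by
    simp only [smul_eq_mul]
    ring
  rw [h2] at h1
  exact h1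

end TautAux

set_option maxHeartbeats 3000000 in
/-- **Lemma A.3.** The derivative `u` of the unique minimizer `U` is (as an element
of `L¹`, i.e. up to a.e. equality) of locally bounded variation on `(a, b)`. -/
theorem minimizer_deriv_locally_bounded_variation
    (h : ℝ) (hh : 0 < h) (w : ℝ → ℝ) (hw : Continuous w)
    (a b : ℝ) (ha : 0 < a) (hab : a < b) (c d : ℝ)
    (hc : |c - w a| ≤ h / 2) (hd : |d - w b| ≤ h / 2)
    (C : ℝ → ℝ) (hC : StrictConvexOn ℝ Set.univ C)
    (U u : ℝ → ℝ) (hU : IsUniqueMinBC a b h c d w C U u) :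
    ∃ v : ℝ → ℝ,
      (∀ᵐ x ∂(volume.restrict (Set.Icc a b)), v x = u x) ∧
      ∀ s t : ℝ, a < s → s < t → t < b → BoundedVariationOn v (Set.Ioo s t) := by
  classical
  have hu_int : IntegrableOn u (Set.Icc a b) := hU.1.1.1.1
  have hform : ∀ x ∈ Set.Icc a b, U x = U a + ∫ t in a..x, u t := hU.1.1.1.2
  have hUc : ContinuousOn U (Set.Icc a b) := by
    have h1 : ContinuousOn (fun x => ∫ t in Set.Ioc a x, u t) (Set.Icc a b) :=
      intervalIntegral.continuousOn_primitive hu_int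
    have h2 : ContinuousOn (fun x => U a + ∫ t in Set.Ioc a x, u t) (Set.Icc a b) :=
      continuousOn_const.add h1
    exact h2.congr (fun x hx => by
      rw [hform x hx, intervalIntegral.integral_of_le hx.1])
  by_cases good : IntegrableOn (fun t => C (u t)) (Set.Icc a b)
  swap
  · exact (TautAux.bad_case_false hh hab hw hUc hU good).elim
  set v : ℝ → ℝ := fun x => limUnder (𝓝[>] x) (fun y => (U y - U x) / (y - x)) with hvdef
  have hslope_int : ∀ x ∈ Set.Icc a b, ∀ y ∈ Set.Icc a b, U y - U x = ∫ t in x..y, u t :=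
    fun x hx y hy => TautAux.sub_eq_integral hu_int hform hx hy
  refine ⟨v, ?_, ?_⟩
  · -- a.e. equality with u
    set g : ℝ → ℝ := (Set.Icc a b).indicator u with hgdef
    have hg_int : Integrable g volume := hu_int.integrable_indicator measurableSet_Icc
    have hleb :=
      (IsUnifLocDoublingMeasure.vitaliFamily (volume : Measure ℝ) 1).ae_tendsto_average
        hg_int.locallyIntegrable
    have hleb' := ae_restrict_of_ae (μ := volume) (s := Set.Icc a b) hleb
    have hIoo : ∀ᵐ x ∂(volume.restrict (Set.Icc a b)), x ∈ Set.Ioo a b := by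
      rw [ae_iff]
      have hmeas : MeasurableSet {x : ℝ | ¬ x ∈ Set.Ioo a b} := by
        simp only [Set.mem_Ioo]
        exact (measurableSet_Ioo (a := a) (b := b)).compl
      rw [Measure.restrict_apply hmeas]
      have hsub : {x : ℝ | ¬ x ∈ Set.Ioo a b} ∩ Set.Icc a b ⊆ ({a, b} : Set ℝ) := by
        intro x hx
        have h1 := hx.1
        have h2 := hx.2
        simp only [Set.mem_setOf_eq, Set.mem_Ioo, not_and_or, not_lt] at h1
        rcases h1 with h1 | h1
        · left; exact le_antisymm h1 h2.1
        · right; exact le_antisymm h2.2 h1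
      refine measure_mono_null hsub ?_
      have : ({a, b} : Set ℝ) = {a} ∪ {b} := by rw [Set.insert_eq]
      rw [this]
      exact measure_union_null Real.volume_singleton Real.volume_singleton
    filter_upwards [hleb', hIoo] with x hx hxIoo
    have hxIcc : x ∈ Set.Icc a b := ⟨hxIoo.1.le, hxIoo.2.le⟩
    have hgx : g x = u x := by
      rw [hgdef]
      exact Set.indicator_of_mem hxIcc u
    have htend : Filter.Tendsto (fun y => (U y - U x) / (y - x)) (𝓝[>] x) (𝓝 (u x)) := by
      have h1 : Filter.Tendsto (fun y => ⨍ t in Set.Icc x y, g t) (𝓝[>] x) (𝓝 (g x)) :=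
        hx.comp (Real.tendsto_Icc_vitaliFamily_right x)
      rw [hgx] at h1
      have heq : (fun y => ⨍ t in Set.Icc x y, g t)
          =ᶠ[𝓝[>] x] (fun y => (U y - U x) / (y - x)) := by
        filter_upwards [Ioo_mem_nhdsGT hxIoo.2] with y hy
        have hxy : x < y := hy.1
        have hyb : y ≤ b := hy.2.le
        have hyIcc : y ∈ Set.Icc a b := ⟨hxIcc.1.trans hxy.le, hyb⟩
        have hInd : ∫ t in Set.Icc x y, g t = ∫ t in Set.Icc x y, u t :=
          setIntegral_congr_fun measurableSet_Icc (fun t ht =>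
            Set.indicator_of_mem (show t ∈ Set.Icc a b from ⟨hxIcc.1.trans ht.1, ht.2.trans hyb⟩) u)
        rw [setAverage_eq, hInd, measureReal_def, Real.volume_Icc,
          ENNReal.toReal_ofReal (by linarith : (0:ℝ) ≤ y - x), smul_eq_mul,
          integral_Icc_eq_integral_Ioc, ← intervalIntegral.integral_of_le hxy.le,
          ← hslope_int x hxIcc y hyIcc, div_eq_inv_mul]
      exact Filter.Tendsto.congr' heq h1
    exact htend.limUnder_eq
  · -- locally bounded variation
    intro s t hs hst htb
    obtain ⟨δ₀, hδ₀pos, hδ₀prop⟩ : ∃ δ₀ > 0, ∀ x ∈ Set.Icc a b, ∀ y ∈ Set.Icc a b,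
        |x - y| ≤ δ₀ → |w x - w y| ≤ h / 8 ∧ |U x - U y| ≤ h / 8 := by
      obtain ⟨δ₁, hδ₁, hU1⟩ := Metric.uniformContinuousOn_iff.1
        (isCompact_Icc.uniformContinuousOn_of_continuous hUc) (h / 8) (by linarith)
      obtain ⟨δ₂, hδ₂, hw1⟩ := Metric.uniformContinuousOn_iff.1
        (isCompact_Icc.uniformContinuousOn_of_continuous hw.continuousOn) (h / 8)
        (by linarith)
      refine ⟨min δ₁ δ₂ / 2, by positivity, ?_⟩
      intro x hx y hy hxy
      have hd1 : dist x y < δ₁ := by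
        rw [Real.dist_eq]
        have := min_le_left δ₁ δ₂
        linarith
      have hd2 : dist x y < δ₂ := by
        rw [Real.dist_eq]
        have := min_le_right δ₁ δ₂
        linarith
      constructor
      · have := hw1 x hx y hy hd2
        rw [Real.dist_eq] at this
        exact this.le
      · have := hU1 x hx y hy hd1
        rw [Real.dist_eq] at this
        exact this.le
    have hsep : ∀ x ∈ Set.Icc a b, ∀ y ∈ Set.Icc a b, |x - y| ≤ δ₀ →
        U x ≤ w x - h / 2 + h / 8 → U y < w y + h / 2 - h / 8 := by
      intro x hx y hy hxy h1
      by_contra h2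
      push_neg at h2
      obtain ⟨ho, hUo⟩ := hδ₀prop x hx y hy hxy
      have ho' := abs_le.1 ho
      have hUo' := abs_le.1 hUo
      linarith [ho'.1, ho'.2, hUo'.1, hUo'.2]
    set ε₀ : ℝ := min (s - a) (b - t) / 2 with hε₀def
    have hε₀pos : 0 < ε₀ := by
      rw [hε₀def]
      have h1 : (0:ℝ) < s - a := by linarith
      have h2 : (0:ℝ) < b - t := by linarith
      positivity
    have hε₀sa : ε₀ < s - a := by
      rw [hε₀def]
      have := min_le_left (s - a) (b - t)
      have h1 : (0:ℝ) < min (s - a) (b - t) := lt_min (by linarith) (by linarith)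
      linarith
    have hε₀bt : ε₀ < b - t := by
      rw [hε₀def]
      have := min_le_right (s - a) (b - t)
      have h1 : (0:ℝ) < min (s - a) (b - t) := lt_min (by linarith) (by linarith)
      linarith
    set Δ₀ : ℝ := min (δ₀ / 3) ε₀ with hΔ₀def
    have hΔ₀pos : 0 < Δ₀ := lt_min (by linarith) hε₀pos
    have hΔ₀δ : Δ₀ ≤ δ₀ / 3 := min_le_left _ _
    have hΔ₀ε : Δ₀ ≤ ε₀ := min_le_right _ _
    obtain ⟨N, hN⟩ := exists_nat_ge ((t - s) / Δ₀)
    set n : ℕ := N + 1 with hndef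
    have hnpos : (0:ℝ) < (n:ℝ) := by
      rw [hndef]
      push_cast
      positivity
    set Δ : ℝ := (t - s) / n with hΔdef
    have hΔpos : 0 < Δ := div_pos (by linarith) hnpos
    have hΔΔ₀ : Δ ≤ Δ₀ := by
      rw [hΔdef, div_le_iff₀ hnpos]
      rw [div_le_iff₀ hΔ₀pos] at hN
      have hNn : (N:ℝ) ≤ (n:ℝ) := by
        rw [hndef]; push_cast; linarith
      nlinarith [hΔ₀pos.le]
    set cgrid : ℕ → ℝ := fun j => s + j * Δ with hcg
    have hc0 : cgrid 0 = s := by simp [hcg]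
    have hcn : cgrid n = t := by
      rw [hcg]
      simp only []
      rw [hΔdef]
      field_simp
      ring
    have hcmono' : ∀ i k : ℕ, i ≤ k → cgrid i ≤ cgrid k := by
      intro i k hik
      simp only [hcg]
      have hik' : (i:ℝ) ≤ (k:ℝ) := Nat.cast_le.2 hik
      nlinarith [hΔpos.le]
    have hnΔ : (n:ℝ) * Δ = t - s := by
      rw [hΔdef]
      field_simp
    have hcIcc : ∀ j : ℕ, j ≤ n → cgrid j ∈ Set.Icc s t := by
      intro j hj
      constructor
      · simp only [hcg]
        nlinarith [hΔpos.le, Nat.cast_nonneg (α := ℝ) j]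
      · simp only [hcg]
        have hj' : (j:ℝ) ≤ (n:ℝ) := Nat.cast_le.2 hj
        nlinarith [hΔpos.le]
    have hQPd : ∀ j : ℕ, cgrid (j+1) - cgrid j = Δ := by
      intro j
      simp only [hcg]
      push_cast
      ring
    clear_value ε₀ Δ₀ n Δ cgrid
    -- bounded variation on each grid interval
    have key : ∀ j : ℕ, j < n → BoundedVariationOn v (Set.Icc (cgrid j) (cgrid (j+1))) := by
      intro j hj
      have hPs : s ≤ cgrid j := (hcIcc j hj.le).1
      have hQt : cgrid (j+1) ≤ t := (hcIcc (j+1) (Nat.succ_le_of_lt hj)).2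
      have hPQ : cgrid j ≤ cgrid (j+1) := hcmono' j (j+1) (Nat.le_succ j)
      have hQP := hQPd j
      have haP : a < cgrid j - Δ := by
        have : Δ ≤ ε₀ := hΔΔ₀.trans hΔ₀ε
        linarith
      have hQb : cgrid (j+1) + Δ < b := by
        have : Δ ≤ ε₀ := hΔΔ₀.trans hΔ₀ε
        linarith
      have hpiece_ab : Set.Icc (cgrid j - Δ) (cgrid (j+1) + Δ) ⊆ Set.Icc a b :=
        fun ξ hξ => ⟨haP.le.trans hξ.1, hξ.2.trans hQb.le⟩
      have hdist3 : ∀ x ∈ Set.Icc (cgrid j - Δ) (cgrid (j+1) + Δ),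
          ∀ y ∈ Set.Icc (cgrid j - Δ) (cgrid (j+1) + Δ), |x - y| ≤ δ₀ := by
        intro x hx y hy
        rw [abs_le]
        have h3 : 3 * Δ ≤ δ₀ := by linarith [hΔΔ₀, hΔ₀δ]
        constructor
        · have := hx.1; have := hy.2; linarith [hQP]
        · have := hx.2; have := hy.1; linarith [hQP]
      have hosc_piece : ∀ x ∈ Set.Icc (cgrid j - Δ) (cgrid (j+1) + Δ),
          ∀ y ∈ Set.Icc (cgrid j - Δ) (cgrid (j+1) + Δ), |w x - w y| ≤ h / 8 :=
        fun x hx y hy =>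
          (hδ₀prop x (hpiece_ab hx) y (hpiece_ab hy) (hdist3 x hx y hy)).1
      apply TautAux.bv_of_mono_or_anti (P := cgrid j) (Q := cgrid (j+1))
      by_cases hflo : ∃ x₀ ∈ Set.Icc (cgrid j - Δ) (cgrid (j+1) + Δ),
          U x₀ ≤ w x₀ - h / 2 + h / 8
      · -- near the floor somewhere: U stays below the ceiling; concave piece
        right
        obtain ⟨x₀, hx₀mem, hx₀⟩ := hflo
        have hconc : ∀ y ∈ Set.Icc (cgrid j - Δ) (cgrid (j+1) + Δ),
            U y < w y + h / 2 - h / 8 := fun y hy =>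
          hsep x₀ (hpiece_ab hx₀mem) y (hpiece_ab hy) (hdist3 x₀ hx₀mem y hy) hx₀
        have hUneg := TautAux.IsUniqueMinBC.neg hU
        have goodneg : IntegrableOn (fun t' => C (-(-(u t')))) (Set.Icc a b) := by
          simp only [neg_neg]
          exact good
        have hconv := TautAux.piece_convex hab (TautAux.convexOn_comp_neg hC.convexOn)
          hUneg goodneg hUc.neg (show (0:ℝ) < h / 8 by linarith) haP.le hQb.le
          (fun x hx => by linarith [hconc x hx])
          (fun x hx y hy => by
            rw [show -(w x) - -(w y) = -(w x - w y) by ring, abs_neg]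
            exact hosc_piece x hx y hy)
        apply TautAux.bv_piece_anti hΔpos hPQ (le_of_eq hQP)
        intro x y z h1 h2 h3 h4
        exact hconv x z ⟨h1, by linarith⟩ ⟨by linarith, h4⟩ y ⟨h2, h3⟩
      · -- away from the floor: convex piece
        left
        push_neg at hflo
        have hconv := TautAux.piece_convex hab hC.convexOn hU good hUc
          (show (0:ℝ) < h / 8 by linarith) haP.le hQb.le
          (fun x hx => (hflo x hx).le)
          hosc_piece
        apply TautAux.bv_piece hΔpos hPQ (le_of_eq hQP)
        intro x y z h1 h2 h3 h4
        exact hconv x z ⟨h1, by linarith⟩ ⟨by linarith, h4⟩ y ⟨h2, h3⟩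
    -- combine the pieces
    have hbig : BoundedVariationOn v (Set.Icc s t) := by
      have H : ∀ j : ℕ, j ≤ n →
          eVariationOn v (Set.Icc s t ∩ Set.Icc (cgrid 0) (cgrid j)) ≠ ⊤ := by
        intro j
        induction j with
        | zero =>
          intro _
          have hsub : (Set.Icc s t ∩ Set.Icc (cgrid 0) (cgrid 0)).Subsingleton := by
            intro x hx y hy
            have hx2 := hx.2
            have hy2 := hy.2
            rw [Set.Icc_self, Set.mem_singleton_iff] at hx2 hy2
            rw [hx2, hy2]
          rw [eVariationOn.subsingleton v hsub]
          exact ENNReal.zero_ne_top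
        | succ j ih =>
          intro hj1
          have hj : j ≤ n := Nat.le_of_succ_le hj1
          have hstep := eVariationOn.Icc_add_Icc v (hcmono' 0 j (Nat.zero_le j))
            (hcmono' j (j+1) (Nat.le_succ j)) (hcIcc j hj)
          rw [← hstep]
          refine ENNReal.add_ne_top.2 ⟨ih hj, ?_⟩
          exact ne_top_of_le_ne_top (key j hj1) (eVariationOn.mono v Set.inter_subset_right)
      have hfin := H n le_rfl
      rw [hc0, hcn, Set.inter_self] at hfin
      exact hfin
    exact hbig.mono Set.Ioo_subset_Icc_self
end
end
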